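/- arXiv:2108.02908 — 3 statements merged into one kernel-verified Lean document; each statement's English description precedes it below -/
import Mathlib

section
/- Let X and Y be real Banach spaces, 1 < p ≤ ∞, and Z = X ⊕_p Y (with norm ‖(x,y)‖ = (‖x‖^p + ‖y‖^p)^{1/p} for p < ∞ and max(‖x‖,‖y‖) for p = ∞). Then the dual Z* has the w*-Ball Dentable Property (w*-BDP) if and only if X* has w*-BDP or Y* has w*-BDP. -/
open Metric Topology Pointwise ENNReal

noncomputable section

/-- The slice `S(B_X, f, α) = {x ∈ B_X : f x > 1 - α}` of the closed unit ball of `X`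
determined by the functional `f` and `α`. -/
def ballSlice (X : Type*) [NormedAddCommGroup X] [NormedSpace ℝ X]
    (f : X →L[ℝ] ℝ) (α : ℝ) : Set X :=
  {x | x ∈ closedBall (0 : X) 1 ∧ 1 - α < f x}

/-- `X` has the Ball Dentable Property: the closed unit ball has slices (determined by
norm-one functionals) of arbitrarily small diameter. -/
def BDP (X : Type*) [NormedAddCommGroup X] [NormedSpace ℝ X] : Prop :=
  ∀ ε > (0 : ℝ), ∃ f : X →L[ℝ] ℝ, ‖f‖ = 1 ∧ ∃ α > (0 : ℝ), diam (ballSlice X f α) < ε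

/-- The weak topology on `X`: the coarsest topology making all continuous linear
functionals continuous. -/
def weakTop (X : Type*) [NormedAddCommGroup X] [NormedSpace ℝ X] : TopologicalSpace X :=
  ⨅ f : X →L[ℝ] ℝ, TopologicalSpace.induced f inferInstance

/-- `X` has the Ball Huskable Property: the closed unit ball has nonempty relatively
weakly open subsets of arbitrarily small diameter. -/
def BHP (X : Type*) [NormedAddCommGroup X] [NormedSpace ℝ X] : Prop :=
  ∀ ε > (0 : ℝ), ∃ V : Set X, IsOpen[weakTop X] V ∧
    (V ∩ closedBall (0 : X) 1).Nonempty ∧ diam (V ∩ closedBall (0 : X) 1) < ε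

/-- `X` has the Ball Small Combination of Slices Property: there are finite convex
combinations of slices of the closed unit ball of arbitrarily small diameter. -/
def BSCSP (X : Type*) [NormedAddCommGroup X] [NormedSpace ℝ X] : Prop :=
  ∀ ε > (0 : ℝ), ∃ (n : ℕ) (f : Fin n → X →L[ℝ] ℝ) (α lam : Fin n → ℝ),
    (∀ i, ‖f i‖ = 1) ∧ (∀ i, 0 < α i) ∧ (∀ i, 0 ≤ lam i) ∧ (∑ i, lam i = 1) ∧
    diam (∑ i, lam i • ballSlice X (f i) (α i)) < ε

/-- The weak* ballSlice `{g ∈ B_{E*} : g e > 1 - α}` of the closed unit ball of the dual of `E`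
determined by `e : E` and `α`. -/
def wstarSlice (E : Type*) [NormedAddCommGroup E] [NormedSpace ℝ E]
    (e : E) (α : ℝ) : Set (E →L[ℝ] ℝ) :=
  {g | g ∈ closedBall (0 : E →L[ℝ] ℝ) 1 ∧ 1 - α < g e}

/-- The dual of `E` has the w*-Ball Dentable Property: the closed unit ball of `E*` has
weak* slices (determined by norm-one elements of `E`) of arbitrarily small diameter. -/
def wstarBDP (E : Type*) [NormedAddCommGroup E] [NormedSpace ℝ E] : Prop :=
  ∀ ε > (0 : ℝ), ∃ e : E, ‖e‖ = 1 ∧ ∃ α > (0 : ℝ), diam (wstarSlice E e α) < ε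

/-- The weak* topology `σ(E*, E)` on the dual of `E`. -/
def wstarTop (E : Type*) [NormedAddCommGroup E] [NormedSpace ℝ E] :
    TopologicalSpace (E →L[ℝ] ℝ) :=
  ⨅ e : E, TopologicalSpace.induced (fun g : E →L[ℝ] ℝ => g e) inferInstance

/-- The dual of `E` has the w*-Ball Huskable Property: the closed unit ball of `E*` has
nonempty relatively weak*-open subsets of arbitrarily small diameter. -/
def wstarBHP (E : Type*) [NormedAddCommGroup E] [NormedSpace ℝ E] : Prop :=
  ∀ ε > (0 : ℝ), ∃ V : Set (E →L[ℝ] ℝ), IsOpen[wstarTop E] V ∧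
    (V ∩ closedBall (0 : E →L[ℝ] ℝ) 1).Nonempty ∧
    diam (V ∩ closedBall (0 : E →L[ℝ] ℝ) 1) < ε

/-- The dual of `E` has the w*-Ball Small Combination of Slices Property: there are finite
convex combinations of weak* slices of the closed unit ball of `E*` of arbitrarily small
diameter. -/
def wstarBSCSP (E : Type*) [NormedAddCommGroup E] [NormedSpace ℝ E] : Prop :=
  ∀ ε > (0 : ℝ), ∃ (n : ℕ) (e : Fin n → E) (α lam : Fin n → ℝ),
    (∀ i, ‖e i‖ = 1) ∧ (∀ i, 0 < α i) ∧ (∀ i, 0 ≤ lam i) ∧ (∑ i, lam i = 1) ∧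
    diam (∑ i, lam i • wstarSlice E (e i) (α i)) < ε

set_option linter.unusedSectionVars false
set_option linter.unusedVariables false

section Aux

lemma wstarSlice_bounded {E : Type*} [NormedAddCommGroup E] [NormedSpace ℝ E]
    (e : E) (α : ℝ) : Bornology.IsBounded (wstarSlice E e α) :=
  (isBounded_closedBall (x := (0 : E →L[ℝ] ℝ)) (r := 1)).subset (fun _ hg => hg.1)

/-- norm bound from values on the unit ball -/
lemma opnorm_le_of_unit {W : Type*} [NormedAddCommGroup W] [NormedSpace ℝ W]
    (f : W →L[ℝ] ℝ) {C : ℝ} (hC : 0 ≤ C) (h : ∀ v : W, ‖v‖ ≤ 1 → f v ≤ C) : ‖f‖ ≤ C := by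
  apply ContinuousLinearMap.opNorm_le_bound _ hC
  intro v
  rcases eq_or_ne v 0 with rfl | hv
  · simp [hC]
  · have hv0 : 0 < ‖v‖ := norm_pos_iff.mpr hv
    have hunit : ‖‖v‖⁻¹ • v‖ ≤ 1 := by
      rw [norm_smul, Real.norm_eq_abs, abs_of_nonneg (inv_nonneg.mpr hv0.le),
        inv_mul_cancel₀ hv0.ne']
    have h1 := h (‖v‖⁻¹ • v) hunit
    have h2 := h (-(‖v‖⁻¹ • v)) (by rwa [norm_neg])
    rw [map_smul, smul_eq_mul] at h1
    rw [map_neg, map_smul, smul_eq_mul] at h2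
    have habs : |‖v‖⁻¹ * f v| ≤ C := abs_le.mpr ⟨by linarith, h1⟩
    have hfv : ‖f v‖ = ‖v‖ * |‖v‖⁻¹ * f v| := by
      rw [abs_mul, abs_of_nonneg (inv_nonneg.mpr hv0.le), Real.norm_eq_abs]
      field_simp
    rw [hfv, mul_comm C ‖v‖]
    exact mul_le_mul_of_nonneg_left habs hv0.le

lemma opnorm_mul_le_of {W : Type*} [NormedAddCommGroup W] [NormedSpace ℝ W]
    (f : W →L[ℝ] ℝ) {c C : ℝ} (hc : 0 < c) (hC : 0 ≤ C)
    (h : ∀ u : W, c * ‖f u‖ ≤ C * ‖u‖) : ‖f‖ * c ≤ C := by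
  rw [mul_comm, ← le_div_iff₀' hc]
  apply ContinuousLinearMap.opNorm_le_bound _ (by positivity)
  intro u
  rw [div_mul_eq_mul_div, le_div_iff₀ hc, mul_comm _ c]
  exact h u

/-- two-term Hölder inequality via Young's inequality -/
lemma holder_two {pr : ℝ} (hpr : 1 < pr) {a b : ℝ} (ha : 0 ≤ a) (hb : 0 ≤ b)
    (hab : a ^ pr + b ^ pr = 1) {s t : ℝ} (hs : 0 ≤ s) (ht : 0 ≤ t) :
    a ^ (pr - 1) * s + b ^ (pr - 1) * t ≤ (s ^ pr + t ^ pr) ^ (1 / pr) := by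
  have hpr0 : (0 : ℝ) < pr := by linarith
  set N : ℝ := (s ^ pr + t ^ pr) ^ (1 / pr) with hN
  have hNn : 0 ≤ N := Real.rpow_nonneg (by positivity) _
  have hsN : s ≤ N := by
    calc s = (s ^ pr) ^ (1 / pr) := by
            rw [one_div, Real.rpow_rpow_inv hs hpr0.ne']
      _ ≤ N := Real.rpow_le_rpow (by positivity)
            (by nlinarith [Real.rpow_nonneg ht pr]) (by positivity)
  have htN : t ≤ N := by
    calc t = (t ^ pr) ^ (1 / pr) := by
            rw [one_div, Real.rpow_rpow_inv ht hpr0.ne']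
      _ ≤ N := Real.rpow_le_rpow (by positivity)
            (by nlinarith [Real.rpow_nonneg hs pr]) (by positivity)
  rcases eq_or_lt_of_le hNn with hN0 | hN0
  · -- N = 0, so s = t = 0
    have hs0 : s = 0 := le_antisymm (hsN.trans hN0.symm.le) hs
    have ht0 : t = 0 := le_antisymm (htN.trans hN0.symm.le) ht
    simp [hs0, ht0, ← hN0]
  · -- N > 0
    have hNpr : N ^ pr = s ^ pr + t ^ pr := by
      rw [hN, one_div, Real.rpow_inv_rpow (by positivity) hpr0.ne']
    set u : ℝ := 1 - 1 / pr with hu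
    have hu0 : 0 ≤ u := by
      rw [hu]
      have : 1 / pr ≤ 1 := by
        rw [div_le_one hpr0]; linarith
      linarith
    have hv0 : 0 ≤ 1 / pr := by positivity
    have huv : u + 1 / pr = 1 := by ring
    have young : ∀ c z : ℝ, 0 ≤ c → 0 ≤ z →
        c ^ (pr - 1) * (z / N) ≤ u * c ^ pr + (1 / pr) * (z / N) ^ pr := by
      intro c z hc hz
      have h1 : c ^ (pr - 1) = (c ^ pr) ^ u := by
        rw [← Real.rpow_mul hc]
        congr 1
        rw [hu]
        field_simp
      have h2 : z / N = ((z / N) ^ pr) ^ (1 / pr) := by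
        rw [one_div, Real.rpow_rpow_inv (by positivity) hpr0.ne']
      calc c ^ (pr - 1) * (z / N) = (c ^ pr) ^ u * ((z / N) ^ pr) ^ (1 / pr) := by
            rw [← h1, ← h2]
        _ ≤ u * c ^ pr + (1 / pr) * (z / N) ^ pr :=
            Real.geom_mean_le_arith_mean2_weighted hu0 hv0 (Real.rpow_nonneg hc _)
              (Real.rpow_nonneg (by positivity) _) huv
    have key : a ^ (pr - 1) * (s / N) + b ^ (pr - 1) * (t / N) ≤ 1 := by
      have h1 := young a s ha hs
      have h2 := young b t hb ht
      have hdiv : (s / N) ^ pr + (t / N) ^ pr = 1 := by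
        rw [Real.div_rpow hs hNn, Real.div_rpow ht hNn, ← add_div, ← hNpr,
          div_self (by positivity)]
      calc a ^ (pr - 1) * (s / N) + b ^ (pr - 1) * (t / N)
          ≤ u * (a ^ pr + b ^ pr) + (1 / pr) * ((s / N) ^ pr + (t / N) ^ pr) := by
            rw [mul_add, mul_add]; linarith
        _ = 1 := by rw [hab, hdiv, mul_one, mul_one, huv]
    have : (a ^ (pr - 1) * s + b ^ (pr - 1) * t) / N ≤ 1 := by
      rw [add_div, mul_div_assoc, mul_div_assoc]
      exact key
    calc a ^ (pr - 1) * s + b ^ (pr - 1) * t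
        = (a ^ (pr - 1) * s + b ^ (pr - 1) * t) / N * N := by
          field_simp
      _ ≤ 1 * N := mul_le_mul_of_nonneg_right this hNn
      _ = N := one_mul N

end Aux

section LpAux

variable {X Y : Type*} [NormedAddCommGroup X] [NormedSpace ℝ X]
  [NormedAddCommGroup Y] [NormedSpace ℝ Y] (p : ℝ≥0∞) [Fact (1 ≤ p)]

def inlL : X →L[ℝ] WithLp p (X × Y) :=
  ((WithLp.prodContinuousLinearEquiv p ℝ X Y).symm).toContinuousLinearMap.comp
    (ContinuousLinearMap.inl ℝ X Y)

def inrL : Y →L[ℝ] WithLp p (X × Y) :=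
  ((WithLp.prodContinuousLinearEquiv p ℝ X Y).symm).toContinuousLinearMap.comp
    (ContinuousLinearMap.inr ℝ X Y)

def fstL : WithLp p (X × Y) →L[ℝ] X :=
  (ContinuousLinearMap.fst ℝ X Y).comp (WithLp.prodContinuousLinearEquiv p ℝ X Y).toContinuousLinearMap

def sndL : WithLp p (X × Y) →L[ℝ] Y :=
  (ContinuousLinearMap.snd ℝ X Y).comp (WithLp.prodContinuousLinearEquiv p ℝ X Y).toContinuousLinearMap

@[simp] lemma inlL_apply (u : X) :
    inlL (Y := Y) p u = (WithLp.equiv p (X × Y)).symm (u, 0) := rfl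
@[simp] lemma inrL_apply (v : Y) :
    inrL (X := X) p v = (WithLp.equiv p (X × Y)).symm (0, v) := rfl
@[simp] lemma fstL_apply (z : WithLp p (X × Y)) : fstL p z = z.fst := rfl
@[simp] lemma sndL_apply (z : WithLp p (X × Y)) : sndL p z = z.snd := rfl

lemma symm_add (u : X) (v : Y) :
    (WithLp.equiv p (X × Y)).symm (u, v) =
      (WithLp.equiv p (X × Y)).symm (u, 0) + (WithLp.equiv p (X × Y)).symm (0, v) := by
  apply (WithLp.equiv p (X × Y)).injective
  simp [Prod.ext_iff]

lemma decompZ (z : WithLp p (X × Y)) :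
    z = (WithLp.equiv p (X × Y)).symm (z.fst, 0)
      + (WithLp.equiv p (X × Y)).symm (0, z.snd) := by
  apply (WithLp.equiv p (X × Y)).injective
  simp [Prod.ext_iff]

lemma normZ_fst_le (z : WithLp p (X × Y)) : ‖z.fst‖ ≤ ‖z‖ := by
  rcases p.dichotomy with rfl | h
  · rw [WithLp.prod_norm_eq_sup]; exact le_sup_left
  · have hpr : 0 < p.toReal := lt_of_lt_of_le one_pos h
    rw [WithLp.prod_norm_eq_add hpr]
    calc ‖z.fst‖
        = (‖z.fst‖ ^ p.toReal) ^ (1 / p.toReal) := by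
          rw [one_div, Real.rpow_rpow_inv (norm_nonneg _) hpr.ne']
      _ ≤ (‖z.fst‖ ^ p.toReal + ‖z.snd‖ ^ p.toReal) ^ (1 / p.toReal) := by
          apply Real.rpow_le_rpow (by positivity) ?_ (by positivity)
          nlinarith [Real.rpow_nonneg (norm_nonneg (z.snd : Y)) p.toReal]

lemma normZ_snd_le (z : WithLp p (X × Y)) : ‖z.snd‖ ≤ ‖z‖ := by
  rcases p.dichotomy with rfl | h
  · rw [WithLp.prod_norm_eq_sup]; exact le_sup_right
  · have hpr : 0 < p.toReal := lt_of_lt_of_le one_pos h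
    rw [WithLp.prod_norm_eq_add hpr]
    calc ‖z.snd‖
        = (‖z.snd‖ ^ p.toReal) ^ (1 / p.toReal) := by
          rw [one_div, Real.rpow_rpow_inv (norm_nonneg _) hpr.ne']
      _ ≤ (‖z.fst‖ ^ p.toReal + ‖z.snd‖ ^ p.toReal) ^ (1 / p.toReal) := by
          apply Real.rpow_le_rpow (by positivity) ?_ (by positivity)
          nlinarith [Real.rpow_nonneg (norm_nonneg (z.fst : X)) p.toReal]

/-- evaluation decomposition of a functional on `WithLp p (X × Y)` -/
lemma funct_decomp (G : WithLp p (X × Y) →L[ℝ] ℝ) (z : WithLp p (X × Y)) :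
    G z = G.comp (inlL p) z.fst + G.comp (inrL p) z.snd := by
  simp only [ContinuousLinearMap.comp_apply, inlL_apply, inrL_apply]
  rw [← map_add]
  exact congrArg G (decompZ p z)

def combL (c₁ c₂ : ℝ) (g₁ : X →L[ℝ] ℝ) (g₂ : Y →L[ℝ] ℝ) : WithLp p (X × Y) →L[ℝ] ℝ :=
  (c₁ • g₁).comp (fstL p) + (c₂ • g₂).comp (sndL p)

@[simp] lemma combL_apply (c₁ c₂ : ℝ) (g₁ : X →L[ℝ] ℝ) (g₂ : Y →L[ℝ] ℝ)
    (z : WithLp p (X × Y)) :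
    combL p c₁ c₂ g₁ g₂ z = c₁ * g₁ z.fst + c₂ * g₂ z.snd := rfl

end LpAux

section Bwd

variable {X Y : Type*} [NormedAddCommGroup X] [NormedSpace ℝ X]
  [NormedAddCommGroup Y] [NormedSpace ℝ Y] (p : ℝ≥0∞) [Fact (1 ≤ p)]

lemma toReal_one_lt {p : ℝ≥0∞} (hp : 1 < p) (hpt : p ≠ ⊤) : 1 < p.toReal := by
  rw [← ENNReal.toReal_one]
  exact (ENNReal.toReal_lt_toReal ENNReal.one_ne_top hpt).mpr hp

lemma rpow_sub_one_mul {x : ℝ} (hx : 0 ≤ x) {pr : ℝ} (h : 1 < pr) :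
    x ^ (pr - 1) * x = x ^ pr := by
  rcases eq_or_lt_of_le hx with hx0 | hx0
  · rw [← hx0, Real.zero_rpow (by linarith : pr - 1 ≠ 0),
      Real.zero_rpow (by linarith : pr ≠ 0), zero_mul]
  · rw [← Real.rpow_add_one hx0.ne' (pr - 1)]
    norm_num

lemma bwd_finish (E : WithLp p (X × Y)) (α' B D : ℝ) (hB : 0 ≤ B) (hD : 0 ≤ D)
    (S : Set (X →L[ℝ] ℝ)) (hS : Bornology.IsBounded S) (hSd : diam S ≤ D)
    (h : ∀ G ∈ wstarSlice (WithLp p (X × Y)) E α',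
      G.comp (inlL p) ∈ S ∧ ‖G.comp (inrL p)‖ ≤ B) :
    diam (wstarSlice (WithLp p (X × Y)) E α') ≤ D + 2 * B := by
  apply diam_le_of_forall_dist_le (by positivity)
  intro G hG G' hG'
  obtain ⟨h1, h2⟩ := h G hG
  obtain ⟨h1', h2'⟩ := h G' hG'
  rw [dist_eq_norm]
  apply ContinuousLinearMap.opNorm_le_bound _ (by positivity)
  intro z
  have hdec : (G - G') z = (G.comp (inlL p) - G'.comp (inlL p)) z.fst
      + (G.comp (inrL p) - G'.comp (inrL p)) z.snd := by
    simp only [ContinuousLinearMap.sub_apply]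
    rw [funct_decomp p G z, funct_decomp p G' z]
    ring
  have d1 : ‖G.comp (inlL p) - G'.comp (inlL p)‖ ≤ D :=
    le_trans (by rw [← dist_eq_norm]; exact dist_le_diam_of_mem hS h1 h1') hSd
  have d2 : ‖G.comp (inrL p) - G'.comp (inrL p)‖ ≤ 2 * B :=
    le_trans (norm_sub_le _ _) (by linarith)
  calc ‖(G - G') z‖
      ≤ ‖(G.comp (inlL p) - G'.comp (inlL p)) z.fst‖
        + ‖(G.comp (inrL p) - G'.comp (inrL p)) z.snd‖ := by rw [hdec]; exact norm_add_le _ _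
    _ ≤ ‖G.comp (inlL p) - G'.comp (inlL p)‖ * ‖z.fst‖
        + ‖G.comp (inrL p) - G'.comp (inrL p)‖ * ‖z.snd‖ :=
        add_le_add (ContinuousLinearMap.le_opNorm _ _) (ContinuousLinearMap.le_opNorm _ _)
    _ ≤ D * ‖z‖ + (2 * B) * ‖z‖ :=
        add_le_add (mul_le_mul d1 (normZ_fst_le p z) (norm_nonneg _) hD)
          (mul_le_mul d2 (normZ_snd_le p z) (norm_nonneg _) (by positivity))
    _ = (D + 2 * B) * ‖z‖ := by ring

lemma bwd_finish' (E : WithLp p (X × Y)) (α' B D : ℝ) (hB : 0 ≤ B) (hD : 0 ≤ D)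
    (S : Set (Y →L[ℝ] ℝ)) (hS : Bornology.IsBounded S) (hSd : diam S ≤ D)
    (h : ∀ G ∈ wstarSlice (WithLp p (X × Y)) E α',
      G.comp (inrL p) ∈ S ∧ ‖G.comp (inlL p)‖ ≤ B) :
    diam (wstarSlice (WithLp p (X × Y)) E α') ≤ D + 2 * B := by
  apply diam_le_of_forall_dist_le (by positivity)
  intro G hG G' hG'
  obtain ⟨h1, h2⟩ := h G hG
  obtain ⟨h1', h2'⟩ := h G' hG'
  rw [dist_eq_norm]
  apply ContinuousLinearMap.opNorm_le_bound _ (by positivity)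
  intro z
  have hdec : (G - G') z = (G.comp (inlL p) - G'.comp (inlL p)) z.fst
      + (G.comp (inrL p) - G'.comp (inrL p)) z.snd := by
    simp only [ContinuousLinearMap.sub_apply]
    rw [funct_decomp p G z, funct_decomp p G' z]
    ring
  have d1 : ‖G.comp (inrL p) - G'.comp (inrL p)‖ ≤ D :=
    le_trans (by rw [← dist_eq_norm]; exact dist_le_diam_of_mem hS h1 h1') hSd
  have d2 : ‖G.comp (inlL p) - G'.comp (inlL p)‖ ≤ 2 * B :=
    le_trans (norm_sub_le _ _) (by linarith)
  calc ‖(G - G') z‖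
      ≤ ‖(G.comp (inlL p) - G'.comp (inlL p)) z.fst‖
        + ‖(G.comp (inrL p) - G'.comp (inrL p)) z.snd‖ := by rw [hdec]; exact norm_add_le _ _
    _ ≤ ‖G.comp (inlL p) - G'.comp (inlL p)‖ * ‖z.fst‖
        + ‖G.comp (inrL p) - G'.comp (inrL p)‖ * ‖z.snd‖ :=
        add_le_add (ContinuousLinearMap.le_opNorm _ _) (ContinuousLinearMap.le_opNorm _ _)
    _ ≤ (2 * B) * ‖z‖ + D * ‖z‖ :=
        add_le_add (mul_le_mul d2 (normZ_fst_le p z) (norm_nonneg _) (by positivity))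
          (mul_le_mul d1 (normZ_snd_le p z) (norm_nonneg _) hD)
    _ = (D + 2 * B) * ‖z‖ := by ring

lemma comp_inlL_norm_le {G : WithLp p (X × Y) →L[ℝ] ℝ} (hG : ‖G‖ ≤ 1) :
    ‖G.comp (inlL p)‖ ≤ 1 := by
  apply ContinuousLinearMap.opNorm_le_bound _ zero_le_one
  intro u
  calc ‖G.comp (inlL p) u‖ ≤ ‖G‖ * ‖inlL (Y := Y) p u‖ := G.le_opNorm _
    _ ≤ 1 * ‖u‖ := by
        rw [inlL_apply, WithLp.equiv_symm_apply, WithLp.norm_toLp_fst]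
        exact mul_le_mul_of_nonneg_right hG (norm_nonneg _) |>.trans (by rw [one_mul])
          |>.trans_eq (one_mul _).symm

lemma comp_inrL_norm_le {G : WithLp p (X × Y) →L[ℝ] ℝ} (hG : ‖G‖ ≤ 1) :
    ‖G.comp (inrL p)‖ ≤ 1 := by
  apply ContinuousLinearMap.opNorm_le_bound _ zero_le_one
  intro u
  calc ‖G.comp (inrL p) u‖ ≤ ‖G‖ * ‖inrL (X := X) p u‖ := G.le_opNorm _
    _ ≤ 1 * ‖u‖ := by
        rw [inrL_apply, WithLp.equiv_symm_apply, WithLp.norm_toLp_snd]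
        exact mul_le_mul_of_nonneg_right hG (norm_nonneg _) |>.trans (by rw [one_mul])
          |>.trans_eq (one_mul _).symm

/-- In the backward direction: a functional in the slice determined by `(e,0)` has small
second component. -/
lemma bwd_small_snd (hp : 1 < p) {e : X} (he : ‖e‖ = 1) {ε : ℝ} (hε : 0 < ε) :
    ∃ δ : ℝ, 0 < δ ∧ ∀ α' ≤ δ, ∀ G : WithLp p (X × Y) →L[ℝ] ℝ, ‖G‖ ≤ 1 →
      1 - α' < G ((WithLp.equiv p (X × Y)).symm (e, 0)) → ‖G.comp (inrL p)‖ ≤ ε := by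
  by_cases hpt : p = ⊤
  · subst hpt
    refine ⟨ε, hε, ?_⟩
    intro α' hα' G hG hGe
    apply opnorm_le_of_unit _ hε.le
    intro v hv
    have hnorm : ‖(WithLp.equiv ⊤ (X × Y)).symm (e, v)‖ ≤ 1 := by
      rw [WithLp.equiv_symm_apply, WithLp.prod_norm_toLp]
      rw [Prod.norm_def]
      simp only [he]
      exact max_le le_rfl hv
    have hval : G ((WithLp.equiv ⊤ (X × Y)).symm (e, v)) =
        G ((WithLp.equiv ⊤ (X × Y)).symm (e, 0)) + G.comp (inrL ⊤) v := by
      rw [symm_add ⊤ e v, map_add]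
      rfl
    have hle : G ((WithLp.equiv ⊤ (X × Y)).symm (e, v)) ≤ 1 := by
      calc G _ ≤ ‖G ((WithLp.equiv ⊤ (X × Y)).symm (e, v))‖ := le_abs_self _
        _ ≤ ‖G‖ * ‖(WithLp.equiv ⊤ (X × Y)).symm (e, v)‖ := G.le_opNorm _
        _ ≤ 1 * 1 := mul_le_mul hG hnorm (norm_nonneg _) zero_le_one
        _ = 1 := one_mul 1
    have : G.comp (inrL ⊤) v ≤ α' := by
      rw [hval] at hle
      linarith
    linarith
  · have hpr1 : 1 < p.toReal := toReal_one_lt hp hpt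
    set pr := p.toReal with hprdef
    have hpr0 : (0 : ℝ) < pr := by linarith
    set t : ℝ := min 1 ((ε / 2) ^ (1 / (pr - 1))) with htdef
    have ht0 : 0 < t := lt_min one_pos (Real.rpow_pos_of_pos (by positivity) _)
    have ht1 : t ≤ 1 := min_le_left _ _
    have htp : t ^ (pr - 1) ≤ ε / 2 := by
      calc t ^ (pr - 1) ≤ ((ε / 2) ^ (1 / (pr - 1))) ^ (pr - 1) :=
            Real.rpow_le_rpow ht0.le (min_le_right _ _) (by linarith)
        _ = ε / 2 := by
            rw [← Real.rpow_mul (by positivity), one_div,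
              inv_mul_cancel₀ (by linarith : pr - 1 ≠ 0), Real.rpow_one]
    refine ⟨t * (ε / 2), by positivity, ?_⟩
    intro α' hα' G hG hGe
    have hbound : ∀ v : Y, ‖v‖ ≤ 1 → G.comp (inrL p) v ≤ ε := by
      intro v hv
      have hnorm : ‖(WithLp.equiv p (X × Y)).symm (e, t • v)‖ ≤ 1 + t ^ pr := by
        rw [WithLp.prod_norm_eq_add hpr0]
        rw [WithLp.equiv_symm_apply, WithLp.toLp_fst, WithLp.toLp_snd]
        have h1 : ‖t • v‖ ^ pr ≤ t ^ pr := by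
          apply Real.rpow_le_rpow (norm_nonneg _) ?_ hpr0.le
          rw [norm_smul, Real.norm_eq_abs, abs_of_nonneg ht0.le]
          calc t * ‖v‖ ≤ t * 1 := mul_le_mul_of_nonneg_left hv ht0.le
            _ = t := mul_one t
        calc (‖e‖ ^ pr + ‖t • v‖ ^ pr) ^ (1 / pr)
            ≤ (1 + t ^ pr) ^ (1 / pr) := by
              apply Real.rpow_le_rpow (by positivity) ?_ (by positivity)
              rw [he, Real.one_rpow]
              linarith
          _ ≤ (1 + t ^ pr) ^ (1 : ℝ) := by
              apply Real.rpow_le_rpow_of_exponent_le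
              · nlinarith [Real.rpow_nonneg ht0.le pr]
              · rw [div_le_one hpr0]; linarith
          _ = 1 + t ^ pr := Real.rpow_one _
      have hval : G ((WithLp.equiv p (X × Y)).symm (e, t • v)) =
          G ((WithLp.equiv p (X × Y)).symm (e, 0)) + t * G.comp (inrL p) v := by
        rw [symm_add p e (t • v), map_add]
        congr 1
        have hsm : (WithLp.equiv p (X × Y)).symm (0, t • v)
            = t • (WithLp.equiv p (X × Y)).symm (0, v) := by
          apply (WithLp.equiv p (X × Y)).injective
          simp
        rw [hsm, map_smul, smul_eq_mul]
        rfl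
      have hle : G ((WithLp.equiv p (X × Y)).symm (e, t • v)) ≤ 1 + t ^ pr := by
        calc G _ ≤ ‖G ((WithLp.equiv p (X × Y)).symm (e, t • v))‖ := le_abs_self _
          _ ≤ ‖G‖ * ‖(WithLp.equiv p (X × Y)).symm (e, t • v)‖ := G.le_opNorm _
          _ ≤ 1 * (1 + t ^ pr) :=
              mul_le_mul hG hnorm (norm_nonneg _) zero_le_one
          _ = 1 + t ^ pr := one_mul _
      have h2 : t * G.comp (inrL p) v ≤ t ^ pr + α' := by
        rw [hval] at hle
        linarith
      have h3 : G.comp (inrL p) v ≤ t ^ (pr - 1) + α' / t := by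
        rw [← mul_le_mul_iff_right₀ ht0, mul_add, mul_comm t (α' / t),
          div_mul_cancel₀ _ ht0.ne']
        calc t * G.comp (inrL p) v ≤ t ^ pr + α' := h2
          _ = t * t ^ (pr - 1) + α' := by
              rw [← rpow_sub_one_mul ht0.le hpr1]; ring
      have h4 : α' / t ≤ ε / 2 := by
        rw [div_le_iff₀ ht0]
        calc α' ≤ t * (ε / 2) := hα'
          _ = ε / 2 * t := mul_comm _ _
      linarith
    exact opnorm_le_of_unit _ hε.le hbound

lemma bwd_small_fst (hp : 1 < p) {e : Y} (he : ‖e‖ = 1) {ε : ℝ} (hε : 0 < ε) :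
    ∃ δ : ℝ, 0 < δ ∧ ∀ α' ≤ δ, ∀ G : WithLp p (X × Y) →L[ℝ] ℝ, ‖G‖ ≤ 1 →
      1 - α' < G ((WithLp.equiv p (X × Y)).symm (0, e)) → ‖G.comp (inlL p)‖ ≤ ε := by
  by_cases hpt : p = ⊤
  · subst hpt
    refine ⟨ε, hε, ?_⟩
    intro α' hα' G hG hGe
    apply opnorm_le_of_unit _ hε.le
    intro v hv
    have hnorm : ‖(WithLp.equiv ⊤ (X × Y)).symm (v, e)‖ ≤ 1 := by
      rw [WithLp.equiv_symm_apply, WithLp.prod_norm_toLp]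
      rw [Prod.norm_def]
      simp only [he]
      exact max_le hv le_rfl
    have hval : G ((WithLp.equiv ⊤ (X × Y)).symm (v, e)) =
        G ((WithLp.equiv ⊤ (X × Y)).symm (0, e)) + G.comp (inlL ⊤) v := by
      rw [symm_add ⊤ v e, map_add]
      rw [add_comm]
      rfl
    have hle : G ((WithLp.equiv ⊤ (X × Y)).symm (v, e)) ≤ 1 := by
      calc G _ ≤ ‖G ((WithLp.equiv ⊤ (X × Y)).symm (v, e))‖ := le_abs_self _
        _ ≤ ‖G‖ * ‖(WithLp.equiv ⊤ (X × Y)).symm (v, e)‖ := G.le_opNorm _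
        _ ≤ 1 * 1 := mul_le_mul hG hnorm (norm_nonneg _) zero_le_one
        _ = 1 := one_mul 1
    have : G.comp (inlL ⊤) v ≤ α' := by
      rw [hval] at hle
      linarith
    linarith
  · have hpr1 : 1 < p.toReal := toReal_one_lt hp hpt
    set pr := p.toReal with hprdef
    have hpr0 : (0 : ℝ) < pr := by linarith
    set t : ℝ := min 1 ((ε / 2) ^ (1 / (pr - 1))) with htdef
    have ht0 : 0 < t := lt_min one_pos (Real.rpow_pos_of_pos (by positivity) _)
    have ht1 : t ≤ 1 := min_le_left _ _
    have htp : t ^ (pr - 1) ≤ ε / 2 := by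
      calc t ^ (pr - 1) ≤ ((ε / 2) ^ (1 / (pr - 1))) ^ (pr - 1) :=
            Real.rpow_le_rpow ht0.le (min_le_right _ _) (by linarith)
        _ = ε / 2 := by
            rw [← Real.rpow_mul (by positivity), one_div,
              inv_mul_cancel₀ (by linarith : pr - 1 ≠ 0), Real.rpow_one]
    refine ⟨t * (ε / 2), by positivity, ?_⟩
    intro α' hα' G hG hGe
    have hbound : ∀ v : X, ‖v‖ ≤ 1 → G.comp (inlL p) v ≤ ε := by
      intro v hv
      have hnorm : ‖(WithLp.equiv p (X × Y)).symm (t • v, e)‖ ≤ 1 + t ^ pr := by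
        rw [WithLp.prod_norm_eq_add hpr0]
        rw [WithLp.equiv_symm_apply, WithLp.toLp_fst, WithLp.toLp_snd]
        have h1 : ‖t • v‖ ^ pr ≤ t ^ pr := by
          apply Real.rpow_le_rpow (norm_nonneg _) ?_ hpr0.le
          rw [norm_smul, Real.norm_eq_abs, abs_of_nonneg ht0.le]
          calc t * ‖v‖ ≤ t * 1 := mul_le_mul_of_nonneg_left hv ht0.le
            _ = t := mul_one t
        calc (‖t • v‖ ^ pr + ‖e‖ ^ pr) ^ (1 / pr)
            ≤ (1 + t ^ pr) ^ (1 / pr) := by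
              apply Real.rpow_le_rpow (by positivity) ?_ (by positivity)
              rw [he, Real.one_rpow]
              linarith
          _ ≤ (1 + t ^ pr) ^ (1 : ℝ) := by
              apply Real.rpow_le_rpow_of_exponent_le
              · nlinarith [Real.rpow_nonneg ht0.le pr]
              · rw [div_le_one hpr0]; linarith
          _ = 1 + t ^ pr := Real.rpow_one _
      have hval : G ((WithLp.equiv p (X × Y)).symm (t • v, e)) =
          G ((WithLp.equiv p (X × Y)).symm (0, e)) + t * G.comp (inlL p) v := by
        rw [symm_add p (t • v) e, map_add]
        rw [add_comm]
        congr 1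
        have hsm : (WithLp.equiv p (X × Y)).symm (t • v, 0)
            = t • (WithLp.equiv p (X × Y)).symm (v, 0) := by
          apply (WithLp.equiv p (X × Y)).injective
          simp
        rw [hsm, map_smul, smul_eq_mul]
        rfl
      have hle : G ((WithLp.equiv p (X × Y)).symm (t • v, e)) ≤ 1 + t ^ pr := by
        calc G _ ≤ ‖G ((WithLp.equiv p (X × Y)).symm (t • v, e))‖ := le_abs_self _
          _ ≤ ‖G‖ * ‖(WithLp.equiv p (X × Y)).symm (t • v, e)‖ := G.le_opNorm _
          _ ≤ 1 * (1 + t ^ pr) :=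
              mul_le_mul hG hnorm (norm_nonneg _) zero_le_one
          _ = 1 + t ^ pr := one_mul _
      have h2 : t * G.comp (inlL p) v ≤ t ^ pr + α' := by
        rw [hval] at hle
        linarith
      have h3 : G.comp (inlL p) v ≤ t ^ (pr - 1) + α' / t := by
        rw [← mul_le_mul_iff_right₀ ht0, mul_add, mul_comm t (α' / t),
          div_mul_cancel₀ _ ht0.ne']
        calc t * G.comp (inlL p) v ≤ t ^ pr + α' := h2
          _ = t * t ^ (pr - 1) + α' := by
              rw [← rpow_sub_one_mul ht0.le hpr1]; ring
      have h4 : α' / t ≤ ε / 2 := by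
        rw [div_le_iff₀ ht0]
        calc α' ≤ t * (ε / 2) := hα'
          _ = ε / 2 * t := mul_comm _ _
      linarith
    exact opnorm_le_of_unit _ hε.le hbound

lemma bwd_fst (hp : 1 < p) (hX : wstarBDP X) : wstarBDP (WithLp p (X × Y)) := by
  intro ε hε
  obtain ⟨e, he, α, hα, hd⟩ := hX (ε / 4) (by positivity)
  obtain ⟨δ, hδ, hδB⟩ := bwd_small_snd (Y := Y) p hp he (show (0:ℝ) < ε / 8 by positivity)
  set α' := min α δ with hα'def
  have hα'pos : 0 < α' := lt_min hα hδ
  refine ⟨(WithLp.equiv p (X × Y)).symm (e, 0), by simp [he], α', hα'pos, ?_⟩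
  have hmem : ∀ G ∈ wstarSlice (WithLp p (X × Y)) ((WithLp.equiv p (X × Y)).symm (e, 0)) α',
      G.comp (inlL p) ∈ wstarSlice X e α ∧ ‖G.comp (inrL p)‖ ≤ ε / 8 := by
    intro G hG
    obtain ⟨hG1, hG2⟩ := hG
    rw [mem_closedBall_zero_iff] at hG1
    refine ⟨⟨?_, ?_⟩, hδB α' (min_le_right _ _) G hG1 hG2⟩
    · rw [mem_closedBall_zero_iff]
      exact comp_inlL_norm_le p hG1
    · show 1 - α < G.comp (inlL p) e
      have heq : G.comp (inlL (Y := Y) p) e = G ((WithLp.equiv p (X × Y)).symm (e, 0)) := rfl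
      rw [heq]
      have : α' ≤ α := min_le_left _ _
      linarith
  have hfin := bwd_finish p ((WithLp.equiv p (X × Y)).symm (e, 0)) α' (ε / 8)
    (diam (wstarSlice X e α)) (by positivity) diam_nonneg _ (wstarSlice_bounded e α)
    le_rfl hmem
  calc diam (wstarSlice (WithLp p (X × Y)) ((WithLp.equiv p (X × Y)).symm (e, 0)) α')
      ≤ diam (wstarSlice X e α) + 2 * (ε / 8) := hfin
    _ < ε := by linarith

lemma bwd_snd (hp : 1 < p) (hY : wstarBDP Y) : wstarBDP (WithLp p (X × Y)) := by
  intro ε hε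
  obtain ⟨e, he, α, hα, hd⟩ := hY (ε / 4) (by positivity)
  obtain ⟨δ, hδ, hδB⟩ := bwd_small_fst (X := X) p hp he (show (0:ℝ) < ε / 8 by positivity)
  set α' := min α δ with hα'def
  have hα'pos : 0 < α' := lt_min hα hδ
  refine ⟨(WithLp.equiv p (X × Y)).symm (0, e), by simp [he], α', hα'pos, ?_⟩
  have hmem : ∀ G ∈ wstarSlice (WithLp p (X × Y)) ((WithLp.equiv p (X × Y)).symm (0, e)) α',
      G.comp (inrL p) ∈ wstarSlice Y e α ∧ ‖G.comp (inlL p)‖ ≤ ε / 8 := by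
    intro G hG
    obtain ⟨hG1, hG2⟩ := hG
    rw [mem_closedBall_zero_iff] at hG1
    refine ⟨⟨?_, ?_⟩, hδB α' (min_le_right _ _) G hG1 hG2⟩
    · rw [mem_closedBall_zero_iff]
      exact comp_inrL_norm_le p hG1
    · show 1 - α < G.comp (inrL p) e
      have heq : G.comp (inrL (X := X) p) e = G ((WithLp.equiv p (X × Y)).symm (0, e)) := rfl
      rw [heq]
      have : α' ≤ α := min_le_left _ _
      linarith
  have hfin := bwd_finish' p ((WithLp.equiv p (X × Y)).symm (0, e)) α' (ε / 8)
    (diam (wstarSlice Y e α)) (by positivity) diam_nonneg _ (wstarSlice_bounded e α)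
    le_rfl hmem
  calc diam (wstarSlice (WithLp p (X × Y)) ((WithLp.equiv p (X × Y)).symm (0, e)) α')
      ≤ diam (wstarSlice Y e α) + 2 * (ε / 8) := hfin
    _ < ε := by linarith

end Bwd

section Fwd

variable {X Y : Type*} [NormedAddCommGroup X] [NormedSpace ℝ X]
  [NormedAddCommGroup Y] [NormedSpace ℝ Y] (p : ℝ≥0∞) [Fact (1 ≤ p)]

lemma diam_transfer {W : Type*} [NormedAddCommGroup W] [NormedSpace ℝ W]
    {M : Type*} [PseudoMetricSpace M]
    (e : W) (α : ℝ) {S : Set M} (hS : Bornology.IsBounded S) {c : ℝ} (hc : 0 < c)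
    (T : (W →L[ℝ] ℝ) → M) (hmem : ∀ g ∈ wstarSlice W e α, T g ∈ S)
    (hdist : ∀ g ∈ wstarSlice W e α, ∀ g' ∈ wstarSlice W e α,
      dist g g' * c ≤ dist (T g) (T g')) :
    diam (wstarSlice W e α) * c ≤ diam S := by
  rw [← le_div_iff₀ hc]
  apply diam_le_of_forall_dist_le (div_nonneg diam_nonneg hc.le)
  intro g hg g' hg'
  rw [le_div_iff₀ hc]
  exact le_trans (hdist g hg g' hg') (dist_le_diam_of_mem hS (hmem g hg) (hmem g' hg'))

lemma half_le_rpow_subone {pr : ℝ} (hpr : 1 < pr) {a : ℝ} (ha : 0 ≤ a)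
    (h : 1 / 2 ≤ a ^ pr) : 1 / 2 ≤ a ^ (pr - 1) := by
  have hpr0 : (0 : ℝ) < pr := by linarith
  have ha2 : (1 / 2 : ℝ) ^ (1 / pr) ≤ a := by
    calc (1 / 2 : ℝ) ^ (1 / pr) ≤ (a ^ pr) ^ (1 / pr) :=
          Real.rpow_le_rpow (by norm_num) h (by positivity)
      _ = a := by rw [one_div, Real.rpow_rpow_inv ha hpr0.ne']
  have e1 : ((1 / 2 : ℝ) ^ (1 / pr)) ^ (pr - 1) ≤ a ^ (pr - 1) :=
    Real.rpow_le_rpow (by positivity) ha2 (by linarith)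
  have e2 : ((1 / 2 : ℝ) ^ (1 / pr)) ^ (pr - 1) = (1 / 2 : ℝ) ^ (1 / pr * (pr - 1)) :=
    (Real.rpow_mul (by norm_num) _ _).symm
  have e3 : (1 / 2 : ℝ) ^ ((1 : ℝ)) ≤ (1 / 2 : ℝ) ^ (1 / pr * (pr - 1)) := by
    apply Real.rpow_le_rpow_of_exponent_ge (by norm_num) (by norm_num)
    rw [one_div, inv_mul_le_iff₀ hpr0]
    linarith
  have e4 : (1 / 2 : ℝ) ^ ((1 : ℝ)) = (1 / 2 : ℝ) := Real.rpow_one _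
  linarith [e1, e2 ▸ e1]

/-- `p = ∞`, first coordinate of norm one: transfer slices. -/
lemma fwd_est_top_fst (w : WithLp ⊤ (X × Y)) {α : ℝ} (hα : 0 < α) (hx1 : ‖w.fst‖ = 1) :
    diam (wstarSlice X w.fst α) ≤ diam (wstarSlice (WithLp ⊤ (X × Y)) w α) := by
  have hmem : ∀ g ∈ wstarSlice X w.fst α,
      g.comp (fstL (X := X) (Y := Y) ⊤) ∈ wstarSlice (WithLp ⊤ (X × Y)) w α := by
    intro g hg
    obtain ⟨hg1, hg2⟩ := hg
    rw [mem_closedBall_zero_iff] at hg1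
    constructor
    · rw [mem_closedBall_zero_iff]
      apply ContinuousLinearMap.opNorm_le_bound _ zero_le_one
      intro z
      calc ‖g.comp (fstL (X := X) (Y := Y) ⊤) z‖ ≤ ‖g‖ * ‖(fstL (X := X) (Y := Y) ⊤) z‖ := g.le_opNorm _
        _ ≤ 1 * ‖z‖ := mul_le_mul hg1 (by rw [fstL_apply]; exact normZ_fst_le ⊤ z)
            (norm_nonneg _) zero_le_one
    · exact hg2
  have hdist : ∀ g ∈ wstarSlice X w.fst α, ∀ g' ∈ wstarSlice X w.fst α,
      dist g g' * 1 ≤ dist (g.comp (fstL (X := X) (Y := Y) ⊤))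
        (g'.comp (fstL (X := X) (Y := Y) ⊤)) := by
    intro g hg g' hg'
    rw [mul_one, dist_eq_norm, dist_eq_norm]
    have hTT : g.comp (fstL (X := X) (Y := Y) ⊤) - g'.comp (fstL (X := X) (Y := Y) ⊤)
        = (g - g').comp (fstL (X := X) (Y := Y) ⊤) := by
      ext z; simp
    rw [hTT]
    apply ContinuousLinearMap.opNorm_le_bound _ (norm_nonneg _)
    intro u
    have heval : ((g - g').comp (fstL (Y := Y) ⊤)) (inlL ⊤ u) = (g - g') u := by
      simp
    calc ‖(g - g') u‖ = ‖((g - g').comp (fstL (Y := Y) ⊤)) (inlL ⊤ u)‖ := by rw [heval]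
      _ ≤ ‖(g - g').comp (fstL (Y := Y) ⊤)‖ * ‖inlL (Y := Y) ⊤ u‖ :=
          ContinuousLinearMap.le_opNorm _ _
      _ = ‖(g - g').comp (fstL (Y := Y) ⊤)‖ * ‖u‖ := by
          rw [inlL_apply, WithLp.equiv_symm_apply, WithLp.norm_toLp_fst]
  simpa using diam_transfer (M := (WithLp ⊤ (X × Y)) →L[ℝ] ℝ) w.fst α
    (wstarSlice_bounded w α) one_pos (fun g => g.comp (fstL (X := X) (Y := Y) ⊤)) hmem hdist

lemma fwd_est_top_snd (w : WithLp ⊤ (X × Y)) {α : ℝ} (hα : 0 < α) (hy1 : ‖w.snd‖ = 1) :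
    diam (wstarSlice Y w.snd α) ≤ diam (wstarSlice (WithLp ⊤ (X × Y)) w α) := by
  have hmem : ∀ g ∈ wstarSlice Y w.snd α,
      g.comp (sndL (X := X) (Y := Y) ⊤) ∈ wstarSlice (WithLp ⊤ (X × Y)) w α := by
    intro g hg
    obtain ⟨hg1, hg2⟩ := hg
    rw [mem_closedBall_zero_iff] at hg1
    constructor
    · rw [mem_closedBall_zero_iff]
      apply ContinuousLinearMap.opNorm_le_bound _ zero_le_one
      intro z
      calc ‖g.comp (sndL (X := X) (Y := Y) ⊤) z‖ ≤ ‖g‖ * ‖(sndL (X := X) (Y := Y) ⊤) z‖ := g.le_opNorm _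
        _ ≤ 1 * ‖z‖ := mul_le_mul hg1 (by rw [sndL_apply]; exact normZ_snd_le ⊤ z)
            (norm_nonneg _) zero_le_one
    · exact hg2
  have hdist : ∀ g ∈ wstarSlice Y w.snd α, ∀ g' ∈ wstarSlice Y w.snd α,
      dist g g' * 1 ≤ dist (g.comp (sndL (X := X) (Y := Y) ⊤))
        (g'.comp (sndL (X := X) (Y := Y) ⊤)) := by
    intro g hg g' hg'
    rw [mul_one, dist_eq_norm, dist_eq_norm]
    have hTT : g.comp (sndL (X := X) (Y := Y) ⊤) - g'.comp (sndL (X := X) (Y := Y) ⊤)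
        = (g - g').comp (sndL (X := X) (Y := Y) ⊤) := by
      ext z; simp
    rw [hTT]
    apply ContinuousLinearMap.opNorm_le_bound _ (norm_nonneg _)
    intro u
    have heval : ((g - g').comp (sndL (X := X) ⊤)) (inrL ⊤ u) = (g - g') u := by
      simp
    calc ‖(g - g') u‖ = ‖((g - g').comp (sndL (X := X) ⊤)) (inrL ⊤ u)‖ := by rw [heval]
      _ ≤ ‖(g - g').comp (sndL (X := X) ⊤)‖ * ‖inrL (X := X) ⊤ u‖ :=
          ContinuousLinearMap.le_opNorm _ _
      _ = ‖(g - g').comp (sndL (X := X) ⊤)‖ * ‖u‖ := by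
          rw [inrL_apply, WithLp.equiv_symm_apply, WithLp.norm_toLp_snd]
  simpa using diam_transfer (M := (WithLp ⊤ (X × Y)) →L[ℝ] ℝ) w.snd α
    (wstarSlice_bounded w α) one_pos (fun g => g.comp (sndL (X := X) (Y := Y) ⊤)) hmem hdist

lemma norm_sum_one (hpt : p ≠ ⊤) (hp : 1 < p) (w : WithLp p (X × Y)) (hw : ‖w‖ = 1) :
    ‖w.fst‖ ^ p.toReal + ‖w.snd‖ ^ p.toReal = 1 := by
  have hpr1 : 1 < p.toReal := toReal_one_lt hp hpt
  have hpr0 : (0 : ℝ) < p.toReal := by linarith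
  have hnorm := WithLp.prod_norm_eq_add hpr0 w
  rw [hw] at hnorm
  have h1 : ((‖w.fst‖ ^ p.toReal + ‖w.snd‖ ^ p.toReal) ^ (1 / p.toReal)) = 1 := hnorm.symm
  calc ‖w.fst‖ ^ p.toReal + ‖w.snd‖ ^ p.toReal
      = ((‖w.fst‖ ^ p.toReal + ‖w.snd‖ ^ p.toReal) ^ (1 / p.toReal)) ^ p.toReal := by
        rw [one_div, Real.rpow_inv_rpow (by positivity) hpr0.ne']
    _ = 1 ^ (p.toReal : ℝ) := by rw [h1]
    _ = 1 := Real.one_rpow _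

/-- `p < ∞`, the key transfer estimate for the first coordinate. -/
lemma fwd_est_fst (hpt : p ≠ ⊤) (hp : 1 < p) (w : WithLp p (X × Y)) (hw : ‖w‖ = 1)
    (hx0 : 0 < ‖w.fst‖) {α : ℝ} (hα : 0 < α) :
    diam (wstarSlice X (‖w.fst‖⁻¹ • w.fst) α) * ‖w.fst‖ ^ (p.toReal - 1) ≤
      diam (wstarSlice (WithLp p (X × Y)) w α) := by
  have hpr1 : 1 < p.toReal := toReal_one_lt hp hpt
  set pr := p.toReal with hprdef
  have hpr0 : (0 : ℝ) < pr := by linarith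
  have hab : ‖w.fst‖ ^ pr + ‖w.snd‖ ^ pr = 1 := norm_sum_one p hpt hp w hw
  set c₁ : ℝ := ‖w.fst‖ ^ (pr - 1) with hc₁def
  set c₂ : ℝ := ‖w.snd‖ ^ (pr - 1) with hc₂def
  have hc₁ : 0 < c₁ := Real.rpow_pos_of_pos hx0 _
  have hc₂n : 0 ≤ c₂ := Real.rpow_nonneg (norm_nonneg _) _
  obtain ⟨g₂, hg₂n, hg₂y⟩ := exists_dual_vector'' ℝ w.snd
  have hg₂y' : g₂ w.snd = ‖w.snd‖ := by exact_mod_cast hg₂y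
  have hmem : ∀ g ∈ wstarSlice X (‖w.fst‖⁻¹ • w.fst) α,
      combL p c₁ c₂ g g₂ ∈ wstarSlice (WithLp p (X × Y)) w α := by
    intro g hg
    obtain ⟨hg1, hg2⟩ := hg
    rw [mem_closedBall_zero_iff] at hg1
    constructor
    · rw [mem_closedBall_zero_iff]
      apply ContinuousLinearMap.opNorm_le_bound _ zero_le_one
      intro z
      rw [combL_apply]
      have hz1 : ‖g z.fst‖ ≤ ‖z.fst‖ := by
        calc ‖g z.fst‖ ≤ ‖g‖ * ‖z.fst‖ := g.le_opNorm _
          _ ≤ 1 * ‖z.fst‖ := mul_le_mul_of_nonneg_right hg1 (norm_nonneg _)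
          _ = ‖z.fst‖ := one_mul _
      have hz2 : ‖g₂ z.snd‖ ≤ ‖z.snd‖ := by
        calc ‖g₂ z.snd‖ ≤ ‖g₂‖ * ‖z.snd‖ := g₂.le_opNorm _
          _ ≤ 1 * ‖z.snd‖ := mul_le_mul_of_nonneg_right hg₂n (norm_nonneg _)
          _ = ‖z.snd‖ := one_mul _
      calc ‖c₁ * g z.fst + c₂ * g₂ z.snd‖
          ≤ ‖c₁ * g z.fst‖ + ‖c₂ * g₂ z.snd‖ := norm_add_le _ _
        _ = c₁ * ‖g z.fst‖ + c₂ * ‖g₂ z.snd‖ := by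
            rw [norm_mul, norm_mul, Real.norm_eq_abs c₁, Real.norm_eq_abs c₂,
              abs_of_pos hc₁, abs_of_nonneg hc₂n]
        _ ≤ c₁ * ‖z.fst‖ + c₂ * ‖z.snd‖ :=
            add_le_add (mul_le_mul_of_nonneg_left hz1 hc₁.le)
              (mul_le_mul_of_nonneg_left hz2 hc₂n)
        _ ≤ (‖z.fst‖ ^ pr + ‖z.snd‖ ^ pr) ^ (1 / pr) :=
            holder_two hpr1 (norm_nonneg _) (norm_nonneg _) hab
              (norm_nonneg _) (norm_nonneg _)
        _ = ‖z‖ := (WithLp.prod_norm_eq_add hpr0 z).symm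
        _ = 1 * ‖z‖ := (one_mul _).symm
    · show 1 - α < combL p c₁ c₂ g g₂ w
      rw [combL_apply, hg₂y']
      have hgw : ‖w.fst‖ * (1 - α) < g w.fst := by
        have heq : g w.fst = ‖w.fst‖ * g (‖w.fst‖⁻¹ • w.fst) := by
          rw [map_smul, smul_eq_mul, ← mul_assoc, mul_inv_cancel₀ hx0.ne', one_mul]
        rw [heq]
        exact mul_lt_mul_of_pos_left hg2 hx0
      have h1 : c₁ * (‖w.fst‖ * (1 - α)) < c₁ * g w.fst := mul_lt_mul_of_pos_left hgw hc₁
      have h2 : c₁ * ‖w.fst‖ = ‖w.fst‖ ^ pr := by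
        rw [hc₁def]; exact rpow_sub_one_mul (norm_nonneg _) hpr1
      have h3 : c₂ * ‖w.snd‖ = ‖w.snd‖ ^ pr := by
        rw [hc₂def]; exact rpow_sub_one_mul (norm_nonneg _) hpr1
      have hA1 : ‖w.fst‖ ^ pr ≤ 1 := by
        nlinarith [Real.rpow_nonneg (norm_nonneg (w.snd : Y)) pr]
      have hA0 : (0 : ℝ) ≤ ‖w.fst‖ ^ pr := Real.rpow_nonneg (norm_nonneg _) pr
      nlinarith [h1, h2, h3, hab]
  have hdist : ∀ g ∈ wstarSlice X (‖w.fst‖⁻¹ • w.fst) α,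
      ∀ g' ∈ wstarSlice X (‖w.fst‖⁻¹ • w.fst) α,
      dist g g' * c₁ ≤ dist (combL p c₁ c₂ g g₂) (combL p c₁ c₂ g' g₂) := by
    intro g hg g' hg'
    rw [dist_eq_norm, dist_eq_norm]
    have hTT : ∀ u : X, (combL p c₁ c₂ g g₂ - combL p c₁ c₂ g' g₂) (inlL p u)
        = c₁ * (g - g') u := by
      intro u
      simp only [ContinuousLinearMap.sub_apply, inlL_apply, combL_apply,
        WithLp.equiv_symm_apply, WithLp.toLp_fst, WithLp.toLp_snd, map_zero, mul_zero, add_zero]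
      ring
    apply opnorm_mul_le_of _ hc₁ (norm_nonneg _)
    intro u
    calc c₁ * ‖(g - g') u‖
        = ‖(combL p c₁ c₂ g g₂ - combL p c₁ c₂ g' g₂) (inlL p u)‖ := by
          rw [hTT u, norm_mul, Real.norm_eq_abs c₁, abs_of_pos hc₁]
      _ ≤ ‖combL p c₁ c₂ g g₂ - combL p c₁ c₂ g' g₂‖ * ‖inlL (Y := Y) p u‖ :=
          ContinuousLinearMap.le_opNorm _ _
      _ = ‖combL p c₁ c₂ g g₂ - combL p c₁ c₂ g' g₂‖ * ‖u‖ := by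
          rw [inlL_apply, WithLp.equiv_symm_apply, WithLp.norm_toLp_fst]
  exact diam_transfer (‖w.fst‖⁻¹ • w.fst) α (wstarSlice_bounded w α) hc₁
    (fun g => combL p c₁ c₂ g g₂) hmem hdist

/-- `p < ∞`, the key transfer estimate for the second coordinate. -/
lemma fwd_est_snd (hpt : p ≠ ⊤) (hp : 1 < p) (w : WithLp p (X × Y)) (hw : ‖w‖ = 1)
    (hy0 : 0 < ‖w.snd‖) {α : ℝ} (hα : 0 < α) :
    diam (wstarSlice Y (‖w.snd‖⁻¹ • w.snd) α) * ‖w.snd‖ ^ (p.toReal - 1) ≤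
      diam (wstarSlice (WithLp p (X × Y)) w α) := by
  have hpr1 : 1 < p.toReal := toReal_one_lt hp hpt
  set pr := p.toReal with hprdef
  have hpr0 : (0 : ℝ) < pr := by linarith
  have hab : ‖w.fst‖ ^ pr + ‖w.snd‖ ^ pr = 1 := norm_sum_one p hpt hp w hw
  set c₁ : ℝ := ‖w.fst‖ ^ (pr - 1) with hc₁def
  set c₂ : ℝ := ‖w.snd‖ ^ (pr - 1) with hc₂def
  have hc₂ : 0 < c₂ := Real.rpow_pos_of_pos hy0 _
  have hc₁n : 0 ≤ c₁ := Real.rpow_nonneg (norm_nonneg _) _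
  obtain ⟨g₁, hg₁n, hg₁x⟩ := exists_dual_vector'' ℝ w.fst
  have hg₁x' : g₁ w.fst = ‖w.fst‖ := by exact_mod_cast hg₁x
  have hmem : ∀ g ∈ wstarSlice Y (‖w.snd‖⁻¹ • w.snd) α,
      combL p c₁ c₂ g₁ g ∈ wstarSlice (WithLp p (X × Y)) w α := by
    intro g hg
    obtain ⟨hg1, hg2⟩ := hg
    rw [mem_closedBall_zero_iff] at hg1
    constructor
    · rw [mem_closedBall_zero_iff]
      apply ContinuousLinearMap.opNorm_le_bound _ zero_le_one
      intro z
      rw [combL_apply]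
      have hz1 : ‖g₁ z.fst‖ ≤ ‖z.fst‖ := by
        calc ‖g₁ z.fst‖ ≤ ‖g₁‖ * ‖z.fst‖ := g₁.le_opNorm _
          _ ≤ 1 * ‖z.fst‖ := mul_le_mul_of_nonneg_right hg₁n (norm_nonneg _)
          _ = ‖z.fst‖ := one_mul _
      have hz2 : ‖g z.snd‖ ≤ ‖z.snd‖ := by
        calc ‖g z.snd‖ ≤ ‖g‖ * ‖z.snd‖ := g.le_opNorm _
          _ ≤ 1 * ‖z.snd‖ := mul_le_mul_of_nonneg_right hg1 (norm_nonneg _)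
          _ = ‖z.snd‖ := one_mul _
      calc ‖c₁ * g₁ z.fst + c₂ * g z.snd‖
          ≤ ‖c₁ * g₁ z.fst‖ + ‖c₂ * g z.snd‖ := norm_add_le _ _
        _ = c₁ * ‖g₁ z.fst‖ + c₂ * ‖g z.snd‖ := by
            rw [norm_mul, norm_mul, Real.norm_eq_abs c₁, Real.norm_eq_abs c₂,
              abs_of_nonneg hc₁n, abs_of_pos hc₂]
        _ ≤ c₁ * ‖z.fst‖ + c₂ * ‖z.snd‖ :=
            add_le_add (mul_le_mul_of_nonneg_left hz1 hc₁n)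
              (mul_le_mul_of_nonneg_left hz2 hc₂.le)
        _ ≤ (‖z.fst‖ ^ pr + ‖z.snd‖ ^ pr) ^ (1 / pr) :=
            holder_two hpr1 (norm_nonneg _) (norm_nonneg _) hab
              (norm_nonneg _) (norm_nonneg _)
        _ = ‖z‖ := (WithLp.prod_norm_eq_add hpr0 z).symm
        _ = 1 * ‖z‖ := (one_mul _).symm
    · show 1 - α < combL p c₁ c₂ g₁ g w
      rw [combL_apply, hg₁x']
      have hgw : ‖w.snd‖ * (1 - α) < g w.snd := by
        have heq : g w.snd = ‖w.snd‖ * g (‖w.snd‖⁻¹ • w.snd) := by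
          rw [map_smul, smul_eq_mul, ← mul_assoc, mul_inv_cancel₀ hy0.ne', one_mul]
        rw [heq]
        exact mul_lt_mul_of_pos_left hg2 hy0
      have h1 : c₂ * (‖w.snd‖ * (1 - α)) < c₂ * g w.snd := mul_lt_mul_of_pos_left hgw hc₂
      have h2 : c₁ * ‖w.fst‖ = ‖w.fst‖ ^ pr := by
        rw [hc₁def]; exact rpow_sub_one_mul (norm_nonneg _) hpr1
      have h3 : c₂ * ‖w.snd‖ = ‖w.snd‖ ^ pr := by
        rw [hc₂def]; exact rpow_sub_one_mul (norm_nonneg _) hpr1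
      have hA1 : ‖w.snd‖ ^ pr ≤ 1 := by
        nlinarith [Real.rpow_nonneg (norm_nonneg (w.fst : X)) pr]
      have hA0 : (0 : ℝ) ≤ ‖w.snd‖ ^ pr := Real.rpow_nonneg (norm_nonneg _) pr
      nlinarith [h1, h2, h3, hab]
  have hdist : ∀ g ∈ wstarSlice Y (‖w.snd‖⁻¹ • w.snd) α,
      ∀ g' ∈ wstarSlice Y (‖w.snd‖⁻¹ • w.snd) α,
      dist g g' * c₂ ≤ dist (combL p c₁ c₂ g₁ g) (combL p c₁ c₂ g₁ g') := by
    intro g hg g' hg'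
    rw [dist_eq_norm, dist_eq_norm]
    have hTT : ∀ u : Y, (combL p c₁ c₂ g₁ g - combL p c₁ c₂ g₁ g') (inrL p u)
        = c₂ * (g - g') u := by
      intro u
      simp only [ContinuousLinearMap.sub_apply, inrL_apply, combL_apply,
        WithLp.equiv_symm_apply, WithLp.toLp_fst, WithLp.toLp_snd, map_zero, mul_zero, zero_add]
      ring
    apply opnorm_mul_le_of _ hc₂ (norm_nonneg _)
    intro u
    calc c₂ * ‖(g - g') u‖
        = ‖(combL p c₁ c₂ g₁ g - combL p c₁ c₂ g₁ g') (inrL p u)‖ := by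
          rw [hTT u, norm_mul, Real.norm_eq_abs c₂, abs_of_pos hc₂]
      _ ≤ ‖combL p c₁ c₂ g₁ g - combL p c₁ c₂ g₁ g'‖ * ‖inrL (X := X) p u‖ :=
          ContinuousLinearMap.le_opNorm _ _
      _ = ‖combL p c₁ c₂ g₁ g - combL p c₁ c₂ g₁ g'‖ * ‖u‖ := by
          rw [inrL_apply, WithLp.equiv_symm_apply, WithLp.norm_toLp_snd]
  exact diam_transfer (‖w.snd‖⁻¹ • w.snd) α (wstarSlice_bounded w α) hc₂
    (fun g => combL p c₁ c₂ g₁ g) hmem hdist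

lemma fwd (hp : 1 < p) (hZ : wstarBDP (WithLp p (X × Y))) (hX : ¬ wstarBDP X) :
    wstarBDP Y := by
  rw [wstarBDP] at hX
  push_neg at hX
  obtain ⟨ε₀, hε₀, hX⟩ := hX
  intro ε' hε'
  obtain ⟨w, hw, α, hα, hdZ⟩ := hZ (min ε' ε₀ / 2) (by positivity)
  by_cases hpt : p = ⊤
  · subst hpt
    have hmax : max ‖w.fst‖ ‖w.snd‖ = 1 := by
      rw [← hw, WithLp.prod_norm_eq_sup]
    rcases max_choice ‖w.fst‖ ‖w.snd‖ with hc | hc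
    · exfalso
      have hx1 : ‖w.fst‖ = 1 := by rw [← hc, hmax]
      have htr := fwd_est_top_fst w hα hx1
      have hXb := hX w.fst hx1 α hα
      have hmin : min ε' ε₀ / 2 ≤ ε₀ / 2 := by
        apply div_le_div_of_nonneg_right ?_ ?_ <;> first | exact min_le_right _ _ | norm_num
      linarith
    · have hy1 : ‖w.snd‖ = 1 := by rw [← hc, hmax]
      refine ⟨w.snd, hy1, α, hα, ?_⟩
      have htr := fwd_est_top_snd w hα hy1
      have hmin : min ε' ε₀ / 2 ≤ ε' / 2 := by
        apply div_le_div_of_nonneg_right ?_ ?_ <;> first | exact min_le_left _ _ | norm_num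
      linarith
  · have hpr1 : 1 < p.toReal := toReal_one_lt hp hpt
    have hpr0 : (0 : ℝ) < p.toReal := by linarith
    have hab : ‖w.fst‖ ^ p.toReal + ‖w.snd‖ ^ p.toReal = 1 := norm_sum_one p hpt hp w hw
    by_cases hhalf : 1 / 2 ≤ ‖w.fst‖ ^ p.toReal
    · exfalso
      have hx0 : 0 < ‖w.fst‖ := by
        rcases eq_or_lt_of_le (norm_nonneg (w.fst : X)) with h0 | h0
        · exfalso
          rw [← h0, Real.zero_rpow hpr0.ne'] at hhalf
          linarith
        · exact h0
      have hc₁half : 1 / 2 ≤ ‖w.fst‖ ^ (p.toReal - 1) :=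
        half_le_rpow_subone hpr1 (norm_nonneg _) hhalf
      have htr := fwd_est_fst p hpt hp w hw hx0 hα
      have hunit : ‖(‖w.fst‖⁻¹ • w.fst : X)‖ = 1 := by
        rw [norm_smul, Real.norm_eq_abs, abs_of_pos (inv_pos.mpr hx0),
          inv_mul_cancel₀ hx0.ne']
      have hXb := hX (‖w.fst‖⁻¹ • w.fst) hunit α hα
      have hmin : min ε' ε₀ / 2 ≤ ε₀ / 2 := by
        apply div_le_div_of_nonneg_right ?_ ?_ <;> first | exact min_le_right _ _ | norm_num
      have hd0 : 0 ≤ diam (wstarSlice X (‖w.fst‖⁻¹ • w.fst) α) := diam_nonneg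
      nlinarith [htr, hXb, hdZ, hmin, hc₁half, hd0, hε₀]
    · have hhalf2 : 1 / 2 ≤ ‖w.snd‖ ^ p.toReal := by
        push_neg at hhalf
        nlinarith [hab]
      have hy0 : 0 < ‖w.snd‖ := by
        rcases eq_or_lt_of_le (norm_nonneg (w.snd : Y)) with h0 | h0
        · exfalso
          rw [← h0, Real.zero_rpow hpr0.ne'] at hhalf2
          linarith
        · exact h0
      have hc₂half : 1 / 2 ≤ ‖w.snd‖ ^ (p.toReal - 1) :=
        half_le_rpow_subone hpr1 (norm_nonneg _) hhalf2
      have htr := fwd_est_snd p hpt hp w hw hy0 hα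
      have hunit : ‖(‖w.snd‖⁻¹ • w.snd : Y)‖ = 1 := by
        rw [norm_smul, Real.norm_eq_abs, abs_of_pos (inv_pos.mpr hy0),
          inv_mul_cancel₀ hy0.ne']
      refine ⟨‖w.snd‖⁻¹ • w.snd, hunit, α, hα, ?_⟩
      have hmin : min ε' ε₀ / 2 ≤ ε' / 2 := by
        apply div_le_div_of_nonneg_right ?_ ?_ <;> first | exact min_le_left _ _ | norm_num
      have hd0 : 0 ≤ diam (wstarSlice Y (‖w.snd‖⁻¹ • w.snd) α) := diam_nonneg
      nlinarith [htr, hdZ, hmin, hc₂half, hd0, hε']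

end Fwd

/-- For `Z = X ⊕_p Y` (`1 < p ≤ ∞`), `Z*` has `w*-BDP` iff `X*` or `Y*` has `w*-BDP`. -/
theorem statement12 (X Y : Type*) [NormedAddCommGroup X] [NormedSpace ℝ X] [CompleteSpace X]
    [NormedAddCommGroup Y] [NormedSpace ℝ Y] [CompleteSpace Y]
    (p : ℝ≥0∞) [Fact (1 ≤ p)] (hp : 1 < p) :
    wstarBDP (WithLp p (X × Y)) ↔ wstarBDP X ∨ wstarBDP Y := by
  constructor
  · intro hZ
    by_cases hX : wstarBDP X
    · exact Or.inl hX
    · exact Or.inr (fwd p hp hZ hX)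
  · rintro (hX | hY)
    · exact bwd_fst p hp hX
    · exact bwd_snd p hp hY
end
end

section
/- Let X and Y be real Banach spaces and Z = X ⊕_1 Y (the product X × Y with norm ‖(x,y)‖ = ‖x‖ + ‖y‖). If the dual Z* has the w*-Ball Huskable Property (w*-BHP), then both X* and Y* have w*-BHP. -/
open Metric Topology Pointwise ENNReal

noncomputable section

/-- Auxiliary transfer lemma: if `X` embeds into `Z` via `J` with a norm-one projection `P`
satisfying an `ℓ¹`-type estimate, then `w*-BHP` passes from `Z*` to `X*`. -/
lemma wstarBHP_transfer {X Z : Type*} [NormedAddCommGroup X] [NormedSpace ℝ X]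
    [NormedAddCommGroup Z] [NormedSpace ℝ Z]
    (J : X →L[ℝ] Z) (P : Z →L[ℝ] X)
    (hPJ : ∀ x, P (J x) = x) (hJ : ∀ x, ‖J x‖ = ‖x‖)
    (hnorm : ∀ z, ‖z - J (P z)‖ + ‖P z‖ ≤ ‖z‖)
    (h : wstarBHP Z) : wstarBHP X := by
  intro ε hε
  obtain ⟨V, hVopen, ⟨h0, hh0V, hh0B⟩, hVd⟩ := h ε hε
  have hh0 : ‖h0‖ ≤ 1 := by rwa [mem_closedBall_zero_iff] at hh0B
  set Φ : (X →L[ℝ] ℝ) → (Z →L[ℝ] ℝ) :=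
    fun f => h0 - (h0.comp J).comp P + f.comp P with hΦ
  -- key evaluation formula
  have hΦeval : ∀ (f : X →L[ℝ] ℝ) (z : Z), Φ f z = h0 (z - J (P z)) + f (P z) := by
    intro f z
    simp [hΦ, map_sub, sub_add_eq_add_sub]
  -- Φ maps the unit ball to the unit ball
  have hΦball : ∀ f : X →L[ℝ] ℝ, ‖f‖ ≤ 1 → ‖Φ f‖ ≤ 1 := by
    intro f hf
    refine ContinuousLinearMap.opNorm_le_bound _ zero_le_one fun z => ?_
    rw [hΦeval, one_mul]
    calc ‖h0 (z - J (P z)) + f (P z)‖ ≤ ‖h0 (z - J (P z))‖ + ‖f (P z)‖ := norm_add_le _ _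
      _ ≤ ‖h0‖ * ‖z - J (P z)‖ + ‖f‖ * ‖P z‖ :=
          add_le_add (h0.le_opNorm _) (f.le_opNorm _)
      _ ≤ 1 * ‖z - J (P z)‖ + 1 * ‖P z‖ :=
          add_le_add (mul_le_mul_of_nonneg_right hh0 (norm_nonneg _))
            (mul_le_mul_of_nonneg_right hf (norm_nonneg _))
      _ = ‖z - J (P z)‖ + ‖P z‖ := by ring
      _ ≤ ‖z‖ := hnorm z
  -- Φ is w*-w* continuous
  have hΦcont : Continuous[wstarTop X, wstarTop Z] Φ := by
    rw [wstarTop]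
    refine continuous_iInf_rng.mpr fun z => continuous_induced_rng.mpr ?_
    have h1 : Continuous[wstarTop X, _] fun f : X →L[ℝ] ℝ => f (P z) := by
      rw [wstarTop]
      exact continuous_iInf_dom (continuous_induced_dom (α := X →L[ℝ] ℝ))
    have hc : Continuous[wstarTop X, _]
        fun f : X →L[ℝ] ℝ => h0 (z - J (P z)) + f (P z) :=
      @Continuous.add _ _ _ _ _ (wstarTop X) _ _
        (@continuous_const _ _ (wstarTop X) _ _) h1
    exact @Continuous.congr _ _ (wstarTop X) _ _ _ hc fun f => (hΦeval f z).symm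
  -- dist is nonexpanded backwards
  have hdist : ∀ f₁ f₂ : X →L[ℝ] ℝ, dist f₁ f₂ ≤ dist (Φ f₁) (Φ f₂) := by
    intro f₁ f₂
    rw [dist_eq_norm, dist_eq_norm]
    have hsub : Φ f₁ - Φ f₂ = (f₁ - f₂).comp P := by
      simp only [hΦ]
      ext z
      simp
    refine ContinuousLinearMap.opNorm_le_bound _ (norm_nonneg _) fun x => ?_
    have : (f₁ - f₂) x = (Φ f₁ - Φ f₂) (J x) := by
      rw [hsub]; simp [hPJ x]
    rw [this]
    calc ‖(Φ f₁ - Φ f₂) (J x)‖ ≤ ‖Φ f₁ - Φ f₂‖ * ‖J x‖ := (Φ f₁ - Φ f₂).le_opNorm _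
      _ = ‖Φ f₁ - Φ f₂‖ * ‖x‖ := by rw [hJ]
  refine ⟨Φ ⁻¹' V, @Continuous.isOpen_preimage _ _ (wstarTop X) (wstarTop Z) Φ hΦcont V hVopen, ?_, ?_⟩
  · refine ⟨h0.comp J, ?_, ?_⟩
    · show Φ (h0.comp J) ∈ V
      have : Φ (h0.comp J) = h0 := by simp [hΦ]
      rwa [this]
    · rw [mem_closedBall_zero_iff]
      refine ContinuousLinearMap.opNorm_le_bound _ zero_le_one fun x => ?_
      calc ‖h0 (J x)‖ ≤ ‖h0‖ * ‖J x‖ := h0.le_opNorm _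
        _ ≤ 1 * ‖x‖ := by rw [hJ]; gcongr
  · have hBnd : Bornology.IsBounded (V ∩ closedBall (0 : Z →L[ℝ] ℝ) 1) :=
      (isBounded_closedBall).subset Set.inter_subset_right
    have hle : diam ((Φ ⁻¹' V) ∩ closedBall (0 : X →L[ℝ] ℝ) 1)
        ≤ diam (V ∩ closedBall (0 : Z →L[ℝ] ℝ) 1) := by
      refine diam_le_of_forall_dist_le diam_nonneg fun f₁ hf₁ f₂ hf₂ => ?_
      have hf₁' : Φ f₁ ∈ V ∩ closedBall (0 : Z →L[ℝ] ℝ) 1 :=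
        ⟨hf₁.1, mem_closedBall_zero_iff.mpr
          (hΦball _ (mem_closedBall_zero_iff.mp hf₁.2))⟩
      have hf₂' : Φ f₂ ∈ V ∩ closedBall (0 : Z →L[ℝ] ℝ) 1 :=
        ⟨hf₂.1, mem_closedBall_zero_iff.mpr
          (hΦball _ (mem_closedBall_zero_iff.mp hf₂.2))⟩
      exact (hdist f₁ f₂).trans (dist_le_diam_of_mem hBnd hf₁' hf₂')
    exact lt_of_le_of_lt hle hVd

/-- If `Z = X ⊕_1 Y` is such that `Z*` has `w*-BHP`, then both `X*` and `Y*` have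
`w*-BHP`. -/
theorem statement15 (X Y : Type*) [NormedAddCommGroup X] [NormedSpace ℝ X] [CompleteSpace X]
    [NormedAddCommGroup Y] [NormedSpace ℝ Y] [CompleteSpace Y]
    (h : wstarBHP (WithLp 1 (X × Y))) :
    wstarBHP X ∧ wstarBHP Y := by
  have hn : ∀ z : WithLp 1 (X × Y), ‖z‖ = ‖z.fst‖ + ‖z.snd‖ := by
    intro z
    rw [WithLp.prod_norm_eq_add (by norm_num)]
    norm_num
  set e : WithLp 1 (X × Y) ≃L[ℝ] X × Y := WithLp.prodContinuousLinearEquiv 1 ℝ X Y with he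
  constructor
  · refine wstarBHP_transfer
      ((e.symm : (X × Y) →L[ℝ] WithLp 1 (X × Y)).comp (ContinuousLinearMap.inl ℝ X Y))
      ((ContinuousLinearMap.fst ℝ X Y).comp (e : WithLp 1 (X × Y) →L[ℝ] X × Y))
      (fun x => ?_) (fun x => ?_) (fun z => ?_) h
    · simp
    · show ‖WithLp.toLp 1 (x, (0 : Y))‖ = ‖x‖
      exact WithLp.norm_toLp_fst 1 X Y x
    · rw [hn z, hn]
      simp only [ContinuousLinearMap.coe_comp', Function.comp_apply,
        ContinuousLinearMap.inl_apply, ContinuousLinearMap.coe_fst',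
        ContinuousLinearEquiv.coe_coe, he,
        WithLp.prodContinuousLinearEquiv_apply, WithLp.prodContinuousLinearEquiv_symm_apply,
        WithLp.sub_fst, WithLp.sub_snd, WithLp.ofLp_fst, WithLp.ofLp_snd,
        WithLp.toLp_fst, WithLp.toLp_snd]
      simp [add_comm]
  · refine wstarBHP_transfer
      ((e.symm : (X × Y) →L[ℝ] WithLp 1 (X × Y)).comp (ContinuousLinearMap.inr ℝ X Y))
      ((ContinuousLinearMap.snd ℝ X Y).comp (e : WithLp 1 (X × Y) →L[ℝ] X × Y))
      (fun y => ?_) (fun y => ?_) (fun z => ?_) h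
    · simp
    · show ‖WithLp.toLp 1 ((0 : X), y)‖ = ‖y‖
      exact WithLp.norm_toLp_snd 1 X Y y
    · rw [hn z, hn]
      simp only [ContinuousLinearMap.coe_comp', Function.comp_apply,
        ContinuousLinearMap.inr_apply, ContinuousLinearMap.coe_snd',
        ContinuousLinearEquiv.coe_coe, he,
        WithLp.prodContinuousLinearEquiv_apply, WithLp.prodContinuousLinearEquiv_symm_apply,
        WithLp.sub_fst, WithLp.sub_snd, WithLp.ofLp_fst, WithLp.ofLp_snd,
        WithLp.toLp_fst, WithLp.toLp_snd]
      simp [add_comm]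
end
end

section
/- Let (Ω, 𝒜, μ) be a finite measure space, X a real Banach space, and 1 ≤ p < ∞. If the Lebesgue–Bochner space L^p(μ, X) of p-integrable X-valued functions (with its usual norm ‖f‖_p = (∫_Ω ‖f(t)‖^p dμ(t))^{1/p}) has the Ball Dentable Property (BDP), then X has BDP. -/
open Metric Topology Pointwise ENNReal

noncomputable section

namespace BDPAux

open MeasureTheory

variable {Ω : Type*} [MeasurableSpace Ω] {μ : Measure Ω}
variable {X : Type*} [NormedAddCommGroup X] [NormedSpace ℝ X]
variable {p : ℝ≥0∞}

theorem indicatorConstLp_smul' {s : Set Ω} (hs : MeasurableSet s) (hμs : μ s ≠ ∞)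
    (r : ℝ) (c : X) :
    indicatorConstLp p hs hμs (r • c) = r • indicatorConstLp p hs hμs c := by
  simp only [indicatorConstLp]
  rw [← MemLp.toLp_const_smul]
  refine MemLp.toLp_congr _ _ (Filter.Eventually.of_forall fun ω => ?_)
  by_cases hω : ω ∈ s <;> simp [Set.indicator, hω]

/-- `x ↦ indicatorConstLp p hs hμs x` as a continuous linear map. -/
def indCLM (X : Type*) [NormedAddCommGroup X] [NormedSpace ℝ X] (p : ℝ≥0∞) [Fact (1 ≤ p)]
    {s : Set Ω} (hs : MeasurableSet s) (hμs : μ s ≠ ∞) : X →L[ℝ] Lp X p μ :=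
  LinearMap.mkContinuous
    { toFun := fun c => indicatorConstLp p hs hμs c
      map_add' := fun _ _ => indicatorConstLp_add.symm
      map_smul' := fun r c => indicatorConstLp_smul' hs hμs r c }
    ((μ s).toReal ^ (1 / p.toReal))
    (fun x => by rw [mul_comm]; exact norm_indicatorConstLp_le (hs := hs) (hμs := hμs) (c := x))

@[simp] theorem indCLM_apply [Fact (1 ≤ p)] {s : Set Ω} (hs : MeasurableSet s) (hμs : μ s ≠ ∞) (c : X) :
    indCLM X p hs hμs c = indicatorConstLp p hs hμs c :=
  LinearMap.mkContinuous_apply _ _ _ c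

theorem coeFn_sum_indicatorConstLp {ι : Type*} (t : Finset ι) {A : ι → Set Ω}
    (hA : ∀ i, MeasurableSet (A i)) (hμA : ∀ i, μ (A i) ≠ ∞) (y : ι → X) :
    ⇑(∑ i ∈ t, indicatorConstLp p (hA i) (hμA i) (y i)) =ᵐ[μ]
      fun ω => ∑ i ∈ t, (A i).indicator (fun _ => y i) ω := by
  classical
  induction t using Finset.induction_on with
  | empty =>
      simp only [Finset.sum_empty]
      exact Lp.coeFn_zero X p μ
  | insert a s ha ih =>
      rw [Finset.sum_insert ha]
      filter_upwards [Lp.coeFn_add (indicatorConstLp p (hA a) (hμA a) (y a))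
          (∑ i ∈ s, indicatorConstLp p (hA i) (hμA i) (y i)),
        indicatorConstLp_coeFn (p := p) (hs := hA a) (hμs := hμA a) (c := y a), ih]
        with ω h1 h2 h3
      rw [h1, Pi.add_apply, h2, h3, Finset.sum_insert ha]

theorem norm_sum_indicatorConstLp (hp0 : p ≠ 0) (hp : p ≠ ∞)
    {ι : Type*} (t : Finset ι) {A : ι → Set Ω}
    (hA : ∀ i, MeasurableSet (A i)) (hμA : ∀ i, μ (A i) ≠ ∞)
    (hd : ∀ i ∈ t, ∀ j ∈ t, i ≠ j → Disjoint (A i) (A j)) (y : ι → X) :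
    ‖∑ i ∈ t, indicatorConstLp p (hA i) (hμA i) (y i)‖ ^ p.toReal
      = ∑ i ∈ t, (μ (A i)).toReal * ‖y i‖ ^ p.toReal := by
  classical
  have hq : 0 < p.toReal := ENNReal.toReal_pos hp0 hp
  set q := p.toReal with hqdef
  have hpt : ∀ ω, (‖∑ i ∈ t, (A i).indicator (fun _ => y i) ω‖₊ : ℝ≥0∞) ^ q
      = ∑ i ∈ t, (A i).indicator (fun _ => (‖y i‖₊ : ℝ≥0∞) ^ q) ω := by
    intro ω
    by_cases hmem : ∃ i ∈ t, ω ∈ A i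
    · obtain ⟨i₀, hi₀t, hi₀⟩ := hmem
      have hnot : ∀ j ∈ t, j ≠ i₀ → ω ∉ A j := fun j hj hne hωj =>
        (Set.disjoint_left.1 (hd j hj i₀ hi₀t hne) hωj) hi₀
      rw [Finset.sum_eq_single_of_mem i₀ hi₀t
            (fun j hj hne => Set.indicator_of_notMem (hnot j hj hne) _),
          Finset.sum_eq_single_of_mem i₀ hi₀t
            (fun j hj hne => Set.indicator_of_notMem (hnot j hj hne) _),
          Set.indicator_of_mem hi₀, Set.indicator_of_mem hi₀]
    · push_neg at hmem
      rw [Finset.sum_eq_zero (fun i hi => Set.indicator_of_notMem (hmem i hi) _),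
          Finset.sum_eq_zero (fun i hi => Set.indicator_of_notMem (hmem i hi) _)]
      simp [ENNReal.zero_rpow_of_pos hq]
  have hint : ∫⁻ ω, (‖∑ i ∈ t, (A i).indicator (fun _ => y i) ω‖₊ : ℝ≥0∞) ^ q ∂μ
      = ∑ i ∈ t, μ (A i) * (‖y i‖₊ : ℝ≥0∞) ^ q := by
    simp_rw [hpt]
    rw [lintegral_finset_sum _ fun i _ => (measurable_const.indicator (hA i))]
    refine Finset.sum_congr rfl fun i _ => ?_
    rw [lintegral_indicator_const (hA i), mul_comm]
  have hfin : ∀ i ∈ t, μ (A i) * (‖y i‖₊ : ℝ≥0∞) ^ q ≠ ∞ :=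
    fun i hi => ENNReal.mul_ne_top (hμA i) (ENNReal.rpow_ne_top_of_nonneg hq.le ENNReal.coe_ne_top)
  have h1 : eLpNorm (⇑(∑ i ∈ t, indicatorConstLp p (hA i) (hμA i) (y i))) p μ
      = (∑ i ∈ t, μ (A i) * (‖y i‖₊ : ℝ≥0∞) ^ q) ^ (1/q) := by
    rw [eLpNorm_congr_ae (coeFn_sum_indicatorConstLp t hA hμA y),
      eLpNorm_eq_lintegral_rpow_enorm_toReal hp0 hp, ← hqdef]
    exact congrArg (fun z => z ^ (1/q)) hint
  rw [Lp.norm_def, h1, ← ENNReal.toReal_rpow, ← Real.rpow_mul ENNReal.toReal_nonneg,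
    one_div_mul_cancel hq.ne', Real.rpow_one, ENNReal.toReal_sum hfin]
  refine Finset.sum_congr rfl fun i _ => ?_
  rw [ENNReal.toReal_mul, ← ENNReal.toReal_rpow]
  simp

end BDPAux

set_option maxHeartbeats 2000000 in
open MeasureTheory in
/-- For a finite measure `μ` and `1 ≤ p < ∞`, if the Lebesgue–Bochner space `Lᵖ(μ, X)`
has `BDP`, then `X` has `BDP`. -/
theorem statement18 (Ω : Type*) [MeasurableSpace Ω] (μ : Measure Ω) [IsFiniteMeasure μ]
    (X : Type*) [NormedAddCommGroup X] [NormedSpace ℝ X] [CompleteSpace X]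
    (p : ℝ≥0∞) [Fact (1 ≤ p)] (hp : p ≠ ∞)
    (h : BDP (Lp X p μ)) : BDP X := by

  classical
  have hp1 : (1 : ℝ≥0∞) ≤ p := Fact.out
  have hp0 : p ≠ 0 := fun h0 => by simp [h0] at hp1
  have hq : 0 < p.toReal := ENNReal.toReal_pos hp0 hp
  intro ε hε
  rcases subsingleton_or_nontrivial X with hX | hX
  · exfalso
    obtain ⟨F, hF, -⟩ := h 1 one_pos
    haveI hsub : Subsingleton (Lp X p μ) :=
      ⟨fun a b => Lp.ext (Filter.Eventually.of_forall fun ω => Subsingleton.elim _ _)⟩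
    rw [ContinuousLinearMap.opNorm_subsingleton] at hF
    exact zero_ne_one hF
  obtain ⟨F, hF1, α₀, hα₀, hdiam⟩ := h (ε/8) (by positivity)
  set α : ℝ := min (α₀/2) (1/2) with hαdef
  have hαpos : 0 < α := lt_min (by linarith) (by norm_num)
  have hα2 : α ≤ 1/2 := min_le_right _ _
  have hαα₀ : α < α₀ := lt_of_le_of_lt (min_le_left _ _) (by linarith)
  -- a point of the unit ball where F is nearly 1
  have hlt : 1 - α/2 < ‖F‖ := by rw [hF1]; linarith
  obtain ⟨g₀, hg₀n, hg₀⟩ := F.exists_lt_apply_of_lt_opNorm hlt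
  obtain ⟨g, hgn, hgF⟩ : ∃ g : Lp X p μ, ‖g‖ ≤ 1 ∧ 1 - α/2 < F g := by
    rcases le_or_gt 0 (F g₀) with hs0 | hs0
    · exact ⟨g₀, hg₀n.le, by rwa [Real.norm_eq_abs, abs_of_nonneg hs0] at hg₀⟩
    · refine ⟨-g₀, by rw [norm_neg]; exact hg₀n.le, ?_⟩
      rw [_root_.map_neg]
      rwa [Real.norm_eq_abs, abs_of_neg hs0] at hg₀
  -- simple function approximation
  obtain ⟨σ, hσclose, hσmem⟩ := (Lp.memLp g).exists_simpleFunc_eLpNorm_sub_lt hp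
    (ne_of_gt (ENNReal.ofReal_pos.2 (by linarith : (0:ℝ) < α/4)))
  set s₀ : Lp X p μ := hσmem.toLp σ with hs₀def
  have hdist : ‖g - s₀‖ < α/4 := by
    rw [Lp.norm_def]
    have heq : eLpNorm (⇑(g - s₀)) p μ = eLpNorm (⇑g - ⇑σ) p μ := by
      apply eLpNorm_congr_ae
      filter_upwards [Lp.coeFn_sub g s₀, hσmem.coeFn_toLp] with ω h1 h2
      rw [h1, Pi.sub_apply, Pi.sub_apply, h2]
    rw [heq]
    exact ENNReal.toReal_lt_of_lt_ofReal hσclose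
  have hFs₀ : 1 - 3*α/4 < F s₀ := by
    have h0 := F.le_opNorm (g - s₀)
    rw [hF1, one_mul] at h0
    have h1 : F g - F s₀ ≤ ‖g - s₀‖ := by
      calc F g - F s₀ = F (g - s₀) := (_root_.map_sub F g s₀).symm
        _ ≤ ‖F (g - s₀)‖ := Real.le_norm_self _
        _ ≤ ‖g - s₀‖ := h0
    linarith
  have hs₀n : ‖s₀‖ ≤ 1 + α/4 := by
    have he : s₀ = g - (g - s₀) := by abel
    calc ‖s₀‖ = ‖g - (g - s₀)‖ := by rw [← he]
      _ ≤ ‖g‖ + ‖g - s₀‖ := norm_sub_le _ _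
      _ ≤ 1 + α/4 := by linarith
  set c : ℝ := (1 + α/4)⁻¹ with hcdef
  have hc0 : 0 < c := by rw [hcdef]; positivity
  set s : Lp X p μ := c • s₀ with hsdef
  have hsn : ‖s‖ ≤ 1 := by
    rw [hsdef, norm_smul, Real.norm_eq_abs, abs_of_pos hc0]
    calc c * ‖s₀‖ ≤ c * (1 + α/4) := mul_le_mul_of_nonneg_left hs₀n hc0.le
      _ = 1 := by rw [hcdef]; field_simp
  have hsF : 1 - α < F s := by
    have h2 : F s = c * F s₀ := by rw [hsdef, _root_.map_smul, smul_eq_mul]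
    rw [h2]
    have h4 : 1 - α ≤ c * (1 - 3*α/4) := by
      rw [hcdef, inv_mul_eq_div, le_div_iff₀ (by linarith)]
      nlinarith
    have h5 : c * (1 - 3*α/4) < c * F s₀ := mul_lt_mul_of_pos_left hFs₀ hc0
    linarith
  -- representation of s as a disjoint sum of indicators
  set t : Finset X := σ.range.erase 0 with htdef
  set A : X → Set Ω := fun y => if y = 0 then ∅ else σ ⁻¹' {y} with hAdef
  have hA : ∀ y, MeasurableSet (A y) := by
    intro y
    by_cases hy : y = 0
    · simp [hAdef, hy]
    · simp only [hAdef, if_neg hy]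
      exact σ.measurableSet_fiber y
  have hμA : ∀ y, μ (A y) ≠ ∞ := by
    intro y
    by_cases hy : y = 0
    · simp [hAdef, hy]
    · simp only [hAdef, if_neg hy]
      exact (SimpleFunc.measure_preimage_lt_top_of_memLp hp0 hp σ hσmem y hy).ne
  have hAt : ∀ y ∈ t, A y = σ ⁻¹' {y} := by
    intro y hy
    simp only [hAdef, if_neg (Finset.ne_of_mem_erase hy)]
  have hd : ∀ y ∈ t, ∀ y' ∈ t, y ≠ y' → Disjoint (A y) (A y') := by
    intro y hy y' hy' hne
    rw [Set.disjoint_left]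
    intro ω hω hω'
    rw [hAt y hy] at hω
    rw [hAt y' hy'] at hω'
    rw [Set.mem_preimage, Set.mem_singleton_iff] at hω hω'
    exact hne (hω.symm.trans hω')
  have hpt : ∀ ω, σ ω = ∑ y ∈ t, (A y).indicator (fun _ => y) ω := by
    intro ω
    by_cases h0 : σ ω = 0
    · rw [h0]
      refine (Finset.sum_eq_zero fun y hy => ?_).symm
      refine Set.indicator_of_notMem ?_ _
      rw [hAt y hy]
      simp only [Set.mem_preimage, Set.mem_singleton_iff]
      intro hc
      exact (Finset.ne_of_mem_erase hy) (hc ▸ h0)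
    · have hmem : σ ω ∈ t := Finset.mem_erase.2 ⟨h0, σ.mem_range_self ω⟩
      have hz : ∀ y ∈ t, y ≠ σ ω → (A y).indicator (fun _ => y) ω = 0 := by
        intro y hy hne
        refine Set.indicator_of_notMem ?_ _
        rw [hAt y hy]
        simp only [Set.mem_preimage, Set.mem_singleton_iff]
        exact fun hc => hne hc.symm
      rw [Finset.sum_eq_single_of_mem (σ ω) hmem hz]
      rw [Set.indicator_of_mem]
      rw [hAt _ hmem]
      exact rfl
  have hs₀rep : s₀ = ∑ y ∈ t, indicatorConstLp p (hA y) (hμA y) y := by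
    refine Lp.ext ?_
    filter_upwards [hσmem.coeFn_toLp,
      BDPAux.coeFn_sum_indicatorConstLp t hA hμA (fun y => y)] with ω h1 h2
    rw [h1, h2]
    exact hpt ω
  set z : X → X := fun y => c • y with hzdef
  have hsrep : s = ∑ y ∈ t, indicatorConstLp p (hA y) (hμA y) (z y) := by
    rw [hsdef, hs₀rep, Finset.smul_sum]
    exact Finset.sum_congr rfl fun y _ => (BDPAux.indicatorConstLp_smul' (hA y) (hμA y) c y).symm
  have hz0 : ∀ y ∈ t, z y ≠ 0 := fun y hy =>
    smul_ne_zero hc0.ne' (Finset.ne_of_mem_erase hy)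
  have hznorm : ∀ y ∈ t, 0 < ‖z y‖ := fun y hy => norm_pos_iff.2 (hz0 y hy)
  set u : X → X := fun y => ‖z y‖⁻¹ • z y with hudef
  have hu1 : ∀ y ∈ t, ‖u y‖ = 1 := by
    intro y hy
    show ‖‖z y‖⁻¹ • z y‖ = 1
    rw [norm_smul, norm_inv, norm_norm, inv_mul_cancel₀ (hznorm y hy).ne']
  have hzu : ∀ y ∈ t, ‖z y‖ • u y = z y := by
    intro y hy
    show ‖z y‖ • (‖z y‖⁻¹ • z y) = z y
    rw [smul_smul, mul_inv_cancel₀ (hznorm y hy).ne', one_smul]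
  set ψ : X → (X →L[ℝ] ℝ) := fun y => F.comp (BDPAux.indCLM X p (hA y) (hμA y)) with hψdef
  have hψap : ∀ y (x : X), ψ y x = F (indicatorConstLp p (hA y) (hμA y) x) := by
    intro y x
    show F.comp (BDPAux.indCLM X p (hA y) (hμA y)) x = _
    rw [ContinuousLinearMap.comp_apply, BDPAux.indCLM_apply]
  set cy : X → ℝ := fun y => ψ y (u y) with hcydef
  have hFs_sum : F s = ∑ y ∈ t, ‖z y‖ * cy y := by
    rw [hsrep, _root_.map_sum]
    refine Finset.sum_congr rfl fun y hy => ?_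
    calc F (indicatorConstLp p (hA y) (hμA y) (z y)) = ψ y (z y) := (hψap y (z y)).symm
      _ = ψ y (‖z y‖ • u y) := by rw [hzu y hy]
      _ = ‖z y‖ * ψ y (u y) := by rw [_root_.map_smul, smul_eq_mul]
      _ = ‖z y‖ * cy y := rfl
  set B : ℝ := ∑ y ∈ t, ‖z y‖ with hBdef
  have hB0 : 0 ≤ B := Finset.sum_nonneg fun y _ => norm_nonneg _
  set δ : ℝ := (α₀ - α)/(B + 1) with hδdef
  have hδ0 : 0 < δ := div_pos (by linarith) (by linarith)
  have hδB : δ * B ≤ α₀ - α := by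
    rw [hδdef, div_mul_eq_mul_div, div_le_iff₀ (by linarith)]
    nlinarith
  set slice : X → Set X := fun y => {w : X | ‖w‖ ≤ 1 ∧ cy y - δ < ψ y w} with hslicedef
  have hslice_mem : ∀ y w, w ∈ slice y ↔ (‖w‖ ≤ 1 ∧ cy y - δ < ψ y w) := fun y w => Iff.rfl
  have hs_norm : ‖s‖ ^ p.toReal = ∑ y ∈ t, (μ (A y)).toReal * ‖z y‖ ^ p.toReal := by
    rw [hsrep]
    exact BDPAux.norm_sum_indicatorConstLp hp0 hp t hA hμA hd _
  have hsnorm_ge : 1 - α ≤ ‖s‖ := by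
    have h0 := F.le_opNorm s
    rw [hF1, one_mul] at h0
    have := Real.le_norm_self (F s)
    linarith
  -- membership lemma
  have hmem_lemma : ∀ v : X → X, (∀ y ∈ t, v y ∈ slice y) →
      (∑ y ∈ t, indicatorConstLp p (hA y) (hμA y) (‖z y‖ • v y))
        ∈ ballSlice (Lp X p μ) F α₀ := by
    intro v hv
    refine ⟨?_, ?_⟩
    · rw [mem_closedBall_zero_iff]
      have hnorm : ‖∑ y ∈ t, indicatorConstLp p (hA y) (hμA y) (‖z y‖ • v y)‖ ^ p.toReal
          = ∑ y ∈ t, (μ (A y)).toReal * ‖‖z y‖ • v y‖ ^ p.toReal :=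
        BDPAux.norm_sum_indicatorConstLp hp0 hp t hA hμA hd _
      have hle : ‖∑ y ∈ t, indicatorConstLp p (hA y) (hμA y) (‖z y‖ • v y)‖ ^ p.toReal
          ≤ ‖s‖ ^ p.toReal := by
        rw [hnorm, hs_norm]
        refine Finset.sum_le_sum fun y hy => ?_
        have h1 : ‖‖z y‖ • v y‖ ≤ ‖z y‖ := by
          rw [norm_smul, norm_norm]
          have h2 := ((hslice_mem y (v y)).1 (hv y hy)).1
          nlinarith [norm_nonneg (z y)]
        exact mul_le_mul_of_nonneg_left
          (Real.rpow_le_rpow (norm_nonneg _) h1 hq.le) ENNReal.toReal_nonneg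
      have h2 : ‖s‖ ^ p.toReal ≤ 1 := Real.rpow_le_one (norm_nonneg _) hsn hq.le
      by_contra hcon
      push_neg at hcon
      have h3 : (1:ℝ) ^ p.toReal < ‖∑ y ∈ t, indicatorConstLp p (hA y) (hμA y)
          (‖z y‖ • v y)‖ ^ p.toReal :=
        Real.rpow_lt_rpow zero_le_one hcon hq
      rw [Real.one_rpow] at h3
      linarith
    · show 1 - α₀ < F (∑ y ∈ t, indicatorConstLp p (hA y) (hμA y) (‖z y‖ • v y))
      rw [_root_.map_sum]
      have hterm : ∀ y ∈ t, ‖z y‖ * (cy y - δ)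
          ≤ F (indicatorConstLp p (hA y) (hμA y) (‖z y‖ • v y)) := by
        intro y hy
        have he : F (indicatorConstLp p (hA y) (hμA y) (‖z y‖ • v y))
            = ‖z y‖ * ψ y (v y) := by
          rw [← hψap y (‖z y‖ • v y), _root_.map_smul, smul_eq_mul]
        rw [he]
        exact mul_le_mul_of_nonneg_left (le_of_lt ((hslice_mem y (v y)).1 (hv y hy)).2)
          (norm_nonneg _)
      have hsum := Finset.sum_le_sum hterm
      have hexp : ∑ y ∈ t, ‖z y‖ * (cy y - δ) = (∑ y ∈ t, ‖z y‖ * cy y) - δ * B := by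
        rw [hBdef, Finset.mul_sum, ← Finset.sum_sub_distrib]
        exact Finset.sum_congr rfl fun y _ => by ring
      rw [hexp, ← hFs_sum] at hsum
      linarith
  -- the key claim: some slice has small diameter
  have hkey : ∃ y ∈ t, ∀ a ∈ slice y, ∀ b ∈ slice y, ‖a - b‖ ≤ ε/2 := by
    by_contra hcon
    push_neg at hcon
    have hchoice : ∀ y, ∃ a b : X, y ∈ t →
        (a ∈ slice y ∧ b ∈ slice y ∧ ε/2 < ‖a - b‖) := by
      intro y
      by_cases hy : y ∈ t
      · obtain ⟨a, ha, b, hb, hab⟩ := hcon y hy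
        exact ⟨a, b, fun _ => ⟨ha, hb, hab⟩⟩
      · exact ⟨0, 0, fun hyt => absurd hyt hy⟩
    choose v v' hvv' using hchoice
    have hv : ∀ y ∈ t, v y ∈ slice y := fun y hy => (hvv' y hy).1
    have hv' : ∀ y ∈ t, v' y ∈ slice y := fun y hy => (hvv' y hy).2.1
    have hm1 := hmem_lemma v hv
    have hm2 := hmem_lemma v' hv'
    have hbd : Bornology.IsBounded (ballSlice (Lp X p μ) F α₀) :=
      Metric.isBounded_closedBall.subset (fun x hx => hx.1)
    have hdd := lt_of_le_of_lt (Metric.dist_le_diam_of_mem hbd hm1 hm2) hdiam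
    rw [dist_eq_norm] at hdd
    have hsub : (∑ y ∈ t, indicatorConstLp p (hA y) (hμA y) (‖z y‖ • v y))
        - (∑ y ∈ t, indicatorConstLp p (hA y) (hμA y) (‖z y‖ • v' y))
        = ∑ y ∈ t, indicatorConstLp p (hA y) (hμA y) (‖z y‖ • (v y - v' y)) := by
      rw [← Finset.sum_sub_distrib]
      refine Finset.sum_congr rfl fun y hy => ?_
      rw [indicatorConstLp_sub, smul_sub]
    have hlow : (‖s‖ * (ε/2)) ^ p.toReal
        ≤ ‖(∑ y ∈ t, indicatorConstLp p (hA y) (hμA y) (‖z y‖ • v y))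
          - (∑ y ∈ t, indicatorConstLp p (hA y) (hμA y) (‖z y‖ • v' y))‖ ^ p.toReal := by
      rw [hsub, BDPAux.norm_sum_indicatorConstLp hp0 hp t hA hμA hd,
        Real.mul_rpow (norm_nonneg _) (by positivity), hs_norm, Finset.sum_mul]
      refine Finset.sum_le_sum fun y hy => ?_
      rw [mul_assoc]
      refine mul_le_mul_of_nonneg_left ?_ ENNReal.toReal_nonneg
      have haux : ∀ (r : ℝ) (w : X), 0 ≤ r → ε/2 ≤ ‖w‖ →
          r ^ p.toReal * (ε/2) ^ p.toReal ≤ ‖r • w‖ ^ p.toReal := by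
        intro r w hr hw
        rw [norm_smul, Real.norm_eq_abs, abs_of_nonneg hr,
          Real.mul_rpow hr (norm_nonneg _)]
        exact mul_le_mul_of_nonneg_left (Real.rpow_le_rpow (by positivity) hw hq.le)
          (Real.rpow_nonneg hr _)
      exact haux ‖z y‖ (v y - v' y) (norm_nonneg _) (le_of_lt (hvv' y hy).2.2)
    have hlow2 : ‖s‖ * (ε/2)
        ≤ ‖(∑ y ∈ t, indicatorConstLp p (hA y) (hμA y) (‖z y‖ • v y))
          - (∑ y ∈ t, indicatorConstLp p (hA y) (hμA y) (‖z y‖ • v' y))‖ := by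
      by_contra hcc
      push_neg at hcc
      have := Real.rpow_lt_rpow (norm_nonneg _) hcc hq
      linarith
    have hhalf : (1:ℝ)/2 ≤ ‖s‖ := by linarith
    nlinarith
  obtain ⟨y₀, hy₀t, hy₀⟩ := hkey
  by_cases hψ0 : ψ y₀ = 0
  · obtain ⟨x₀, hx₀⟩ := exists_ne (0 : X)
    obtain ⟨f, hf1, -⟩ := exists_dual_vector ℝ x₀ (norm_ne_zero_iff.2 hx₀)
    refine ⟨f, hf1, 1, one_pos, ?_⟩
    have hsub : ballSlice X f 1 ⊆ slice y₀ := by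
      intro w hw
      refine (hslice_mem y₀ w).2 ⟨mem_closedBall_zero_iff.1 hw.1, ?_⟩
      have hc0' : cy y₀ = 0 := by
        rw [hcydef]
        show ψ y₀ (u y₀) = 0
        rw [hψ0]
        rfl
      rw [hψ0, hc0']
      show (0:ℝ) - δ < 0
      linarith
    have hd1 : diam (ballSlice X f 1) ≤ ε/2 :=
      Metric.diam_le_of_forall_dist_le (by positivity) (fun a ha b hb => by
        rw [dist_eq_norm]; exact hy₀ a (hsub ha) b (hsub hb))
    linarith
  · have hψn : 0 < ‖ψ y₀‖ := norm_pos_iff.2 hψ0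
    refine ⟨‖ψ y₀‖⁻¹ • ψ y₀, ?_, δ / ‖ψ y₀‖, by positivity, ?_⟩
    · exact norm_smul_inv_norm hψ0
    · have hcyle : cy y₀ ≤ ‖ψ y₀‖ := by
        calc cy y₀ = ψ y₀ (u y₀) := rfl
          _ ≤ ‖ψ y₀ (u y₀)‖ := Real.le_norm_self _
          _ ≤ ‖ψ y₀‖ * ‖u y₀‖ := (ψ y₀).le_opNorm _
          _ = ‖ψ y₀‖ := by rw [hu1 y₀ hy₀t, mul_one]
      have hsub : ballSlice X (‖ψ y₀‖⁻¹ • ψ y₀) (δ / ‖ψ y₀‖) ⊆ slice y₀ := by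
        intro w hw
        obtain ⟨hw1, hw2⟩ := hw
        refine (hslice_mem y₀ w).2 ⟨mem_closedBall_zero_iff.1 hw1, ?_⟩
        have happ : (‖ψ y₀‖⁻¹ • ψ y₀) w = ‖ψ y₀‖⁻¹ * ψ y₀ w := rfl
        rw [happ] at hw2
        have hw2' : (1 - δ/‖ψ y₀‖) * ‖ψ y₀‖ < ψ y₀ w := by
          calc (1 - δ/‖ψ y₀‖) * ‖ψ y₀‖ < (‖ψ y₀‖⁻¹ * ψ y₀ w) * ‖ψ y₀‖ :=
                mul_lt_mul_of_pos_right hw2 hψn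
            _ = ψ y₀ w := by field_simp
        have hexpand : (1 - δ/‖ψ y₀‖) * ‖ψ y₀‖ = ‖ψ y₀‖ - δ := by field_simp
        rw [hexpand] at hw2'
        linarith
      have hd1 : diam (ballSlice X (‖ψ y₀‖⁻¹ • ψ y₀) (δ / ‖ψ y₀‖)) ≤ ε/2 :=
        Metric.diam_le_of_forall_dist_le (by positivity) (fun a ha b hb => by
          rw [dist_eq_norm]; exact hy₀ a (hsub ha) b (hsub hb))
      linarith
end
end
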